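/- arXiv:1903.09996 — 5 statements merged into one kernel-verified Lean document; each statement's English description precedes it below -/
import Mathlib

section
/- Zero eigenvalue of the normalized N-cycle matrix (Proposition 3.2(i), existence and simplicity). Let A(a) be the normalized N-cycle matrix defined in the context. Then: (a) for every a ≥ 0, the matrix A(a) has 0 as an eigenvalue (equivalently det A(a) = 0) if and only if (−1)^{N_aut} = β and a = 1; (b) if (−1)^{N_aut} = β, then 0 is an algebraically simple root of the characteristic polynomial of A(1) if and only if Σ_{m=1}^N 1/α_m ≠ 0. -/
open scoped BigOperators

/-- The normalized `N`-cycle matrix `A(a)`: diagonal entries `-a·α m`,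
sub-diagonal entries `1`, corner entry `A 0 (N-1) = β`; all other entries `0`. -/
noncomputable def Acyc (N : ℕ) (α : Fin N → ℝ) (β : ℝ) (a : ℝ) :
    Matrix (Fin N) (Fin N) ℝ :=
  Matrix.of fun i j =>
    if j = i then -(a * α i)
    else if ((j : ℕ) + 1) % N = (i : ℕ) then (if (i : ℕ) = 0 then β else 1) else 0

/-- The eigenvalues of a real matrix: roots in `ℂ` of its characteristic
polynomial, counted with algebraic multiplicity. -/
noncomputable def specC {N : ℕ} (A : Matrix (Fin N) (Fin N) ℝ) : Multiset ℂ :=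
  (Matrix.charpoly (A.map (algebraMap ℝ ℂ))).roots

/-- `μ(A)`: the number of eigenvalues of `A` with strictly positive real part,
counted with algebraic multiplicity. -/
noncomputable def muM {N : ℕ} (A : Matrix (Fin N) (Fin N) ℝ) : ℕ :=
  Multiset.card ((specC A).filter fun z => 0 < z.re)

/-- `N_aut`: the number of indices `m` with `α m < 0`. -/
noncomputable def NautOf {N : ℕ} (α : Fin N → ℝ) : ℕ :=
  (Finset.univ.filter fun m => α m < 0).card

open Polynomial Equiv

open Fin.NatCast Fin.CommRing in
/-- Classification of permutations of `Fin (n+1)` moving each element by `0` or `+1`. -/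
lemma perm_classify_aux (n : ℕ) (hn : 1 ≤ n) (σ : Equiv.Perm (Fin (n+1)))
    (h : ∀ i, σ i = i ∨ σ i = i + 1) :
    σ = 1 ∨ σ = finRotate (n+1) := by
  have h10 : (1 : Fin (n+1)) ≠ 0 := by
    intro h; have := congrArg Fin.val h
    simp [Fin.val_one] at this
    omega
  by_cases he : ∃ i, σ i = i + 1
  · right
    obtain ⟨i₀, hi₀⟩ := he
    have key : ∀ k : ℕ, σ (i₀ + k) = i₀ + k + 1 := by
      intro k
      induction k with
      | zero => simpa using hi₀
      | succ k ih =>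
        have hk : σ (i₀ + k + 1) = i₀ + k + 1 ∨ σ (i₀ + k + 1) = i₀ + k + 1 + 1 :=
          h _
        rcases hk with hk | hk
        · exfalso
          have : σ (i₀ + k) = σ (i₀ + k + 1) := by rw [ih, hk]
          have := σ.injective this
          have : (1 : Fin (n+1)) = 0 := by
            have h2 := this
            have : i₀ + k + 1 = i₀ + k + 0 := by rw [add_zero]; exact h2.symm
            exact add_left_cancel this
          exact h10 this
        · have : ((i₀ : Fin (n+1)) + (k+1 : ℕ)) = i₀ + k + 1 := by
            push_cast; ring
          rw [this, hk]
    ext i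
    rw [finRotate_succ_apply]
    have : i = i₀ + ((i - i₀).val : Fin (n+1)) := by
      rw [Fin.cast_val_eq_self]; ring
    rw [this] at *
    rw [key]
  · left
    push_neg at he
    ext i
    rcases h i with hi | hi
    · simpa using congrArg Fin.val hi
    · exact absurd hi (he i)

/-- The characteristic polynomial of the normalized cycle matrix. -/
lemma charpoly_Acyc_aux (n : ℕ) (hn : 2 ≤ n) (α : Fin (n+1) → ℝ) (β a : ℝ) :
    (Acyc (n+1) α β a).charpoly
      = ∏ i, (X + C (a * α i)) - C β := by
  classical
  have h10 : (1 : Fin (n+1)) ≠ 0 := by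
    intro h; have := congrArg Fin.val h; simp [Fin.val_one] at this; omega
  have hadd1 : ∀ i : Fin (n+1), ((i : ℕ) + 1) % (n+1) = ((i + 1 : Fin (n+1)) : ℕ) := by
    intro i
    rw [Fin.val_add, Fin.val_one']
    have h1 : 1 % (n+1) = 1 := Nat.mod_eq_of_lt (by omega)
    rw [h1]
  have hne : ∀ i : Fin (n+1), i + 1 ≠ i := by
    intro i h
    exact h10 (by simpa using congrArg (fun x => x - i) h)
  have hsub : ∀ i : Fin (n+1), Acyc (n+1) α β a (i+1) i
      = (if ((i+1 : Fin (n+1)) : ℕ) = 0 then β else 1) := by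
    intro i
    simp only [Acyc, Matrix.of_apply]
    rw [if_neg, if_pos (hadd1 i)]
    intro h; exact hne i h.symm
  rw [Matrix.charpoly, Matrix.det_apply]
  have hone : (1 : Perm (Fin (n+1))) ∈ (Finset.univ : Finset (Perm (Fin (n+1)))) :=
    Finset.mem_univ _
  have hrot : finRotate (n+1) ∈ (Finset.univ : Finset (Perm (Fin (n+1)))) := Finset.mem_univ _
  have hne1rot : (1 : Perm (Fin (n+1))) ≠ finRotate (n+1) := by
    intro h
    have h2 : (1 : Perm (Fin (n+1))) 0 = finRotate (n+1) 0 := by rw [h]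
    simp only [Perm.one_apply, finRotate_succ_apply, zero_add] at h2
    exact h10 h2.symm
  rw [Finset.sum_eq_add_of_mem _ _ hone hrot hne1rot ?_]
  · have hdiag : ∀ i : Fin (n+1), (Acyc (n+1) α β a).charmatrix i i = X + C (a * α i) := by
      intro i
      rw [Matrix.charmatrix_apply_eq]
      simp [Acyc, sub_neg_eq_add]
    have t1 : (Equiv.Perm.sign (1 : Perm (Fin (n+1)))) •
        ∏ i, (Acyc (n+1) α β a).charmatrix ((1 : Perm (Fin (n+1))) i) i
        = ∏ i, (X + C (a * α i)) := by
      simp only [Equiv.Perm.sign_one, one_smul, Perm.one_apply]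
      exact Finset.prod_congr rfl fun i _ => hdiag i
    have t2 : (Equiv.Perm.sign (finRotate (n+1))) •
        ∏ i, (Acyc (n+1) α β a).charmatrix (finRotate (n+1) i) i = - C β := by
      have hprod : ∏ i, (Acyc (n+1) α β a).charmatrix (finRotate (n+1) i) i
          = (-1 : ℝ[X])^(n+1) * C β := by
        have : ∀ i : Fin (n+1), (Acyc (n+1) α β a).charmatrix (finRotate (n+1) i) i
            = - C (if ((i+1 : Fin (n+1)) : ℕ) = 0 then β else 1) := by
          intro i
          rw [finRotate_succ_apply, Matrix.charmatrix_apply_ne _ _ _ (hne i), hsub i]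
        rw [Finset.prod_congr rfl fun i _ => this i]
        have hneg : ∏ i : Fin (n+1), -C (if ((i+1 : Fin (n+1)) : ℕ) = 0 then β else 1)
            = ∏ i : Fin (n+1), ((-1 : ℝ[X]) * C (if ((i+1 : Fin (n+1)) : ℕ) = 0 then β else 1)) :=
          Finset.prod_congr rfl fun i _ => (neg_one_mul _).symm
        rw [hneg, Finset.prod_mul_distrib, Finset.prod_const, Finset.card_univ, Fintype.card_fin]
        congr 1
        rw [← map_prod]
        congr 1
        rw [Finset.prod_eq_single (Fin.last n)]
        · rw [if_pos]
          have : ((Fin.last n + 1 : Fin (n+1)) : ℕ) = (n + 1) % (n+1) := by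
            rw [← hadd1]; simp [Fin.val_last]
          rw [this, Nat.mod_self]
        · intro i _ hine
          rw [if_neg]
          intro h
          apply hine
          have : i + 1 = 0 := Fin.ext (by simpa using h)
          have : i = -1 := by
            have := congrArg (fun x => x - 1) this
            simpa using this
          rw [this]
          ext
          simp [Fin.val_last]
        · intro h; exact absurd (Finset.mem_univ _) h
      rw [hprod, sign_finRotate]
      rw [Units.smul_def]
      push_cast
      rw [zsmul_eq_mul]
      push_cast
      rw [← mul_assoc, ← pow_add]
      have : (-1 : ℝ[X]) ^ (n + (n+1)) = -1 := by
        rw [show n + (n+1) = 2*n+1 by ring, pow_succ, pow_mul]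
        norm_num
      rw [this]
      ring
    rw [t1, t2]
    ring
  · intro σ _ hσ
    obtain ⟨hσ1, hσ2⟩ := hσ
    have : ¬ ∀ i, σ i = i ∨ σ i = i + 1 := by
      intro h
      rcases perm_classify_aux n (by omega) σ h with h | h
      exacts [hσ1 h, hσ2 h]
    push_neg at this
    obtain ⟨i, hi1, hi2⟩ := this
    apply smul_eq_zero_of_right
    apply Finset.prod_eq_zero (Finset.mem_univ i)
    rw [Matrix.charmatrix_apply_ne _ _ _ hi1]
    have : Acyc (n+1) α β a (σ i) i = 0 := by
      have hcol : ¬ ((i : Fin (n+1)) = σ i) := fun h => hi1 h.symm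
      have hc2 : ¬ (((i : ℕ) + 1) % (n+1) = ((σ i : Fin (n+1)) : ℕ)) := by
        intro h
        apply hi2
        apply Fin.ext
        rw [← hadd1 i]
        exact h.symm
      simp only [Acyc, Matrix.of_apply, if_neg hcol, if_neg hc2]
    rw [this]
    simp


lemma derivative_finset_prod' {ι : Type*} [DecidableEq ι] {R : Type*} [CommRing R]
    (s : Finset ι) (f : ι → R[X]) :
    Polynomial.derivative (∏ i ∈ s, f i)
      = ∑ i ∈ s, (∏ j ∈ s.erase i, f j) * Polynomial.derivative (f i) := by
  induction s using Finset.induction_on with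
  | empty => simp
  | @insert a s ha ih =>
    rw [Finset.prod_insert ha, Polynomial.derivative_mul, ih, Finset.sum_insert ha,
      Finset.erase_insert ha, Finset.mul_sum]
    congr 1
    · ring
    · refine Finset.sum_congr rfl fun i hi => ?_
      have hia : i ≠ a := fun h => ha (h ▸ hi)
      rw [Finset.erase_insert_of_ne hia.symm, Finset.prod_insert (fun h => ha (Finset.mem_of_mem_erase h))]
      ring


lemma prod_eq_neg_one_pow_aux {N : ℕ} (α : Fin N → ℝ)
    (hprod : ∏ m : Fin N, |α m| = 1) :
    ∏ m : Fin N, α m = (-1 : ℝ) ^ (NautOf α) := by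
  have : ∀ m, α m = (if α m < 0 then (-1:ℝ) else 1) * |α m| := by
    intro m
    by_cases h : α m < 0
    · rw [if_pos h, abs_of_neg h]; ring
    · rw [if_neg h, abs_of_nonneg (not_lt.mp h), one_mul]
  calc ∏ m, α m = ∏ m, (if α m < 0 then (-1:ℝ) else 1) * |α m| :=
        Finset.prod_congr rfl fun m _ => this m
    _ = (∏ m, (if α m < 0 then (-1:ℝ) else 1)) * ∏ m, |α m| := Finset.prod_mul_distrib
    _ = (-1 : ℝ) ^ (NautOf α) := by
        rw [hprod, mul_one, Finset.prod_ite, Finset.prod_const, Finset.prod_const,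
          one_pow, mul_one, NautOf]

lemma pow_cond_aux (a : ℝ) (ha : 0 ≤ a) (N : ℕ) (hN : 3 ≤ N) (k : ℕ) (b : ℤ)
    (hb : b = 1 ∨ b = -1) :
    (a ^ N * (-1 : ℝ) ^ k = (b : ℝ)) ↔ ((-1 : ℤ) ^ k = b ∧ a = 1) := by
  have hNne : N ≠ 0 := by omega
  have hpow1 : a ^ N = 1 → a = 1 := by
    intro h
    rcases lt_trichotomy a 1 with h1 | h1 | h1
    · exact absurd h (by have := pow_lt_one₀ ha h1 hNne; linarith)
    · exact h1
    · exact absurd h (by have := one_lt_pow₀ h1 hNne; linarith)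
  have haN : (0:ℝ) ≤ a ^ N := pow_nonneg ha N
  constructor
  · intro h
    rcases Nat.even_or_odd k with hk | hk
    · rw [hk.neg_one_pow, mul_one] at h
      rcases hb with rfl | rfl
      · exact ⟨hk.neg_one_pow, hpow1 (by push_cast at h; linarith)⟩
      · exfalso; push_cast at h; linarith
    · rw [hk.neg_one_pow, mul_neg_one] at h
      rcases hb with rfl | rfl
      · exfalso; push_cast at h; linarith
      · exact ⟨hk.neg_one_pow, hpow1 (by push_cast at h; linarith)⟩
  · rintro ⟨hk, rfl⟩
    rw [one_pow, one_mul, ← hk]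
    push_cast
    ring

/-- **Zero eigenvalue of the normalized N-cycle matrix (Proposition 3.2(i),
existence and simplicity).** (a) For `a ≥ 0`, `A(a)` has eigenvalue `0` iff
`(−1)^{N_aut} = β` and `a = 1`. (b) If `(−1)^{N_aut} = β`, then `0` is an
algebraically simple root of the characteristic polynomial of `A(1)` iff
`Σ_m 1/α_m ≠ 0`. -/
theorem zero_eigenvalue_Acyc (N : ℕ) (hN : 3 ≤ N) (α : Fin N → ℝ)
    (hα : ∀ m, α m ≠ 0) (hprod : ∏ m : Fin N, |α m| = 1)
    (b : ℤ) (hb : b = 1 ∨ b = -1) :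
    (∀ a : ℝ, 0 ≤ a →
      (((0 : ℂ) ∈ specC (Acyc N α (b : ℝ) a)) ↔
        ((-1 : ℤ) ^ (NautOf α) = b ∧ a = 1))) ∧
    ((-1 : ℤ) ^ (NautOf α) = b →
      (Polynomial.rootMultiplicity (0 : ℂ)
          (Matrix.charpoly ((Acyc N α (b : ℝ) 1).map (algebraMap ℝ ℂ))) = 1 ↔
        ∑ m : Fin N, (α m)⁻¹ ≠ 0)) := by
  classical
  obtain ⟨n, rfl⟩ : ∃ n, N = n + 1 := ⟨N - 1, by omega⟩
  have hn : 2 ≤ n := by omega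
  have hprodα : ∏ m : Fin (n+1), α m = (-1 : ℝ) ^ (NautOf α) :=
    prod_eq_neg_one_pow_aux α hprod
  -- the complex charpoly
  have hmap : ∀ a : ℝ, (Matrix.charpoly ((Acyc (n+1) α (b : ℝ) a).map (algebraMap ℝ ℂ)))
      = (∏ i, (X + C ((a * α i : ℝ) : ℂ))) - C ((b : ℝ) : ℂ) := by
    intro a
    rw [Matrix.charpoly_map, charpoly_Acyc_aux n hn α (b : ℝ) a]
    rw [Polynomial.map_sub, Polynomial.map_prod, Polynomial.map_C]
    congr 1
    refine Finset.prod_congr rfl fun i _ => ?_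
    rw [Polynomial.map_add, Polynomial.map_X, Polynomial.map_C]
    rfl
  have hmonic : ∀ a : ℝ,
      (Matrix.charpoly ((Acyc (n+1) α (b : ℝ) a).map (algebraMap ℝ ℂ))).Monic :=
    fun a => Matrix.charpoly_monic _
  have heval : ∀ a : ℝ,
      (Matrix.charpoly ((Acyc (n+1) α (b : ℝ) a).map (algebraMap ℝ ℂ))).eval 0
        = (((a ^ (n+1) * (-1 : ℝ) ^ (NautOf α) - b : ℝ)) : ℂ) := by
    intro a
    rw [hmap a]
    rw [Polynomial.eval_sub, Polynomial.eval_prod, Polynomial.eval_C]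
    have : ∀ i : Fin (n+1), (X + C ((a * α i : ℝ) : ℂ)).eval 0 = ((a * α i : ℝ) : ℂ) := by
      intro i; simp
    rw [Finset.prod_congr rfl fun i _ => this i]
    have hp : ∏ i : Fin (n+1), (a * α i) = a^(n+1) * (-1:ℝ)^(NautOf α) := by
      rw [Finset.prod_mul_distrib, Finset.prod_const, Finset.card_univ, Fintype.card_fin,
        hprodα]
    rw [← Complex.ofReal_prod, hp]
    push_cast
    ring
  constructor
  · -- part (a)
    intro a ha
    rw [specC, Polynomial.mem_roots ((hmonic a).ne_zero), Polynomial.IsRoot.def, heval a]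
    rw [Complex.ofReal_eq_zero, sub_eq_zero]
    exact ⟨fun h => (pow_cond_aux a ha (n+1) hN (NautOf α) b hb).mp h,
      fun h => (pow_cond_aux a ha (n+1) hN (NautOf α) b hb).mpr h⟩
  · -- part (b)
    intro hbeq
    set q := Matrix.charpoly ((Acyc (n+1) α (b : ℝ) 1).map (algebraMap ℝ ℂ)) with hq
    have hq0 : q ≠ 0 := (hmonic 1).ne_zero
    have hroot : q.IsRoot 0 := by
      rw [Polynomial.IsRoot.def, heval 1]
      rw [Complex.ofReal_eq_zero, one_pow, one_mul, sub_eq_zero, ← hbeq]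
      push_cast
      ring
    have hpos : 0 < q.rootMultiplicity 0 := (Polynomial.rootMultiplicity_pos hq0).mpr hroot
    have hlt := Polynomial.one_lt_rootMultiplicity_iff_isRoot hq0 (t := (0 : ℂ))
    -- compute derivative eval
    have hderiv : (Polynomial.derivative q).eval 0
        = ((∏ m : Fin (n+1), α m : ℝ) : ℂ) * ((∑ m : Fin (n+1), (α m)⁻¹ : ℝ) : ℂ) := by
      rw [hq, hmap 1]
      rw [Polynomial.derivative_sub, Polynomial.derivative_C, sub_zero,
        derivative_finset_prod' Finset.univ _]
      rw [Polynomial.eval_finset_sum]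
      have : ∀ i : Fin (n+1),
          ((∏ j ∈ Finset.univ.erase i, (X + C ((1 * α j : ℝ) : ℂ))) *
            Polynomial.derivative (X + C ((1 * α i : ℝ) : ℂ))).eval 0
          = ((∏ m : Fin (n+1), α m : ℝ) : ℂ) * (((α i : ℝ) : ℂ))⁻¹ := by
        intro i
        rw [Polynomial.eval_mul]
        have hd : Polynomial.derivative (X + C ((1 * α i : ℝ) : ℂ)) = 1 := by
          rw [Polynomial.derivative_add, Polynomial.derivative_X, Polynomial.derivative_C,
            add_zero]
        rw [hd, Polynomial.eval_one, mul_one, Polynomial.eval_prod]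
        have he : ∀ j : Fin (n+1), (X + C ((1 * α j : ℝ) : ℂ)).eval 0 = ((α j : ℝ) : ℂ) := by
          intro j; simp
        rw [Finset.prod_congr rfl fun j _ => he j]
        have hne : ((α i : ℝ) : ℂ) ≠ 0 := by
          simpa using hα i
        have := Finset.mul_prod_erase Finset.univ (fun j : Fin (n+1) => ((α j : ℝ) : ℂ))
          (Finset.mem_univ i)
        field_simp
        rw [Complex.ofReal_prod, ← this]
        push_cast
        ring
      rw [Finset.sum_congr rfl fun i _ => this i, ← Finset.mul_sum]
      congr 1
      push_cast
      rfl
    have hprodne : ((∏ m : Fin (n+1), α m : ℝ) : ℂ) ≠ 0 := by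
      rw [Complex.ofReal_ne_zero]
      rw [hprodα]
      positivity
    constructor
    · intro h1 hsum
      have : ¬ (1 < q.rootMultiplicity 0) := by omega
      rw [hlt] at this
      push_neg at this
      have hd := this hroot
      rw [Polynomial.IsRoot.def, hderiv] at hd
      apply hd
      rw [hsum]
      push_cast
      ring
    · intro hsum
      have : ¬ (1 < q.rootMultiplicity 0) := by
        rw [hlt]
        rintro ⟨-, hd⟩
        rw [Polynomial.IsRoot.def, hderiv] at hd
        rcases mul_eq_zero.mp hd with h | h
        · exact hprodne h
        · exact hsum (by exact_mod_cast h)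
      omega
end

section
/- Transverse crossing of the zero eigenvalue at a = 1 (Proposition 3.2(i), derivative formula (3.12)). Let A(a) be the normalized N-cycle matrix defined in the context, assume (−1)^{N_aut} = β and Σ_{m=1}^N 1/α_m ≠ 0. Let δ > 0 and let λ : (1−δ, 1+δ) → ℝ be differentiable with λ(1) = 0 and det(λ(a)·I_N − A(a)) = 0 for all a ∈ (1−δ, 1+δ). Then λ'(1) = −N / (Σ_{m=1}^N 1/α_m), i.e. λ'(1) equals minus the harmonic mean of α_1,…,α_N. -/
open scoped BigOperators

open Fin.NatCast Fin.CommRing in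
/-- A permutation of `Fin (n+2)` such that each `i` is mapped to `i` or `i+1`
is the identity or the full rotation. -/
lemma perm_cycle_aux (n : ℕ) (σ : Equiv.Perm (Fin (n+2)))
    (h : ∀ i, σ i = i ∨ σ i = i + 1) : σ = 1 ∨ σ = finRotate (n+2) := by
  by_cases hid : σ = 1
  · exact Or.inl hid
  right
  obtain ⟨i0, hi0⟩ : ∃ i, σ i ≠ i := by
    by_contra hc
    push_neg at hc
    exact hid (Equiv.ext fun i => hc i)
  have hone : (1 : Fin (n+2)) ≠ 0 := by simp [Fin.ext_iff]
  have hi0' : σ i0 = i0 + 1 := (h i0).resolve_left hi0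
  have step : ∀ i, σ i = i + 1 → σ (i+1) = (i+1) + 1 := by
    intro i hi
    rcases h (i+1) with h' | h'
    · exfalso
      have := σ.injective (hi.trans h'.symm)
      exact hone (left_eq_add.mp this)
    · exact h'
  have all : ∀ k : ℕ, σ (i0 + (k : Fin (n+2))) = i0 + (k : Fin (n+2)) + 1 := by
    intro k
    induction k with
    | zero => simpa using hi0'
    | succ k ih =>
      have hstep := step _ ih
      have hc : ((k+1 : ℕ) : Fin (n+2)) = (k : Fin (n+2)) + 1 := by push_cast; ring
      rw [hc, ← add_assoc]
      exact hstep
  apply Equiv.ext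
  intro j
  have hj := all (j - i0).val
  rw [Fin.cast_val_eq_self] at hj
  have : i0 + (j - i0) = j := by abel
  rw [this] at hj
  simpa [finRotate_succ_apply] using hj

open Fin.CommRing in
/-- Determinant of the cyclic bidiagonal matrix. -/
lemma det_cyc_aux (n : ℕ) (d : Fin (n+2) → ℝ) (β : ℝ) :
    (Matrix.of fun i j : Fin (n+2) =>
      if j = i then d i else if i = j + 1 then -(if i = 0 then β else 1) else 0).det
    = ∏ i, d i - β := by
  set M : Matrix (Fin (n+2)) (Fin (n+2)) ℝ := Matrix.of fun i j =>
      if j = i then d i else if i = j + 1 then -(if i = 0 then β else 1) else 0 with hM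
  have hone : (1 : Fin (n+2)) ≠ 0 := by simp [Fin.ext_iff]
  have hkey : ∀ σ : Equiv.Perm (Fin (n+2)), σ ≠ 1 → σ ≠ finRotate (n+2) →
      (Equiv.Perm.sign σ : ℤ) • ∏ i, M (σ i) i = 0 := by
    intro σ h1 hc
    by_cases hz : ∃ i, M (σ i) i = 0
    · obtain ⟨i, hi⟩ := hz
      rw [Finset.prod_eq_zero (f := fun j => M (σ j) j) (Finset.mem_univ i) hi, smul_zero]
    · push_neg at hz
      exfalso
      have hor : ∀ i, σ i = i ∨ σ i = i + 1 := by
        intro i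
        by_contra hcon
        push_neg at hcon
        apply hz i
        simp only [hM, Matrix.of_apply]
        rw [if_neg (fun hh : i = σ i => hcon.1 hh.symm), if_neg hcon.2]
      rcases perm_cycle_aux n σ hor with rfl | rfl
      · exact h1 rfl
      · exact hc rfl
  have hne : (1 : Equiv.Perm (Fin (n+2))) ≠ finRotate (n+2) := by
    intro hh
    have : (0 : Fin (n+2)) = finRotate (n+2) 0 := by rw [← hh]; rfl
    rw [finRotate_succ_apply, zero_add] at this
    exact hone this.symm
  rw [Matrix.det_apply]
  rw [← Finset.sum_subset (Finset.subset_univ ({1, finRotate (n+2)} : Finset (Equiv.Perm (Fin (n+2)))))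
    (fun σ _ hσ => by
      simp only [Finset.mem_insert, Finset.mem_singleton, not_or] at hσ
      exact hkey σ hσ.1 hσ.2)]
  rw [Finset.sum_pair hne]
  have hself : ∀ i : Fin (n+2), ¬ (i = i + 1) := by
    intro i hh
    exact hone (left_eq_add.mp hh)
  have e1 : ∀ i : Fin (n+2), M ((1 : Equiv.Perm (Fin (n+2))) i) i = d i := by
    intro i
    simp [hM]
  have e2 : ∀ i : Fin (n+2), M (finRotate (n+2) i) i
      = (-1) * (if i = -1 then β else 1) := by
    intro i
    rw [finRotate_succ_apply]
    simp only [hM, Matrix.of_apply]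
    rw [if_neg (hself i)]
    have hcond : (i + 1 = 0) ↔ (i = -1) := by
      constructor
      · intro hh; exact eq_neg_of_add_eq_zero_left hh
      · intro hh; rw [hh]; ring
    simp only [eq_self_iff_true, if_true, hcond]
    split <;> ring
  simp only [e1, e2]
  rw [Finset.prod_mul_distrib, Finset.prod_const,
    Finset.prod_ite_eq' Finset.univ (-1 : Fin (n+2)) (fun _ => β)]
  simp only [Finset.mem_univ, if_true, Finset.card_univ, Fintype.card_fin]
  rw [sign_finRotate]
  have hodd : Odd (n + 2 - 1 + (n + 2)) := ⟨n + 1, by omega⟩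
  simp only [Equiv.Perm.sign_one, Units.smul_def, Units.val_pow_eq_pow_val,
    Units.val_neg, Units.val_one, one_smul, zsmul_eq_mul, Int.cast_pow, Int.cast_neg,
    Int.cast_one, smul_eq_mul]
  rw [← mul_assoc, ← pow_add, hodd.neg_one_pow]
  ring

/-- The key analytic/algebraic step: if the product `∏ (λ(a) + a α_m)` is constant
near `a = 1` and `λ(1) = 0`, then `λ'(1)` is minus the harmonic mean. -/
lemma deriv_of_const_prod (n : ℕ)
    (α : Fin (n+2) → ℝ) (hα : ∀ m, α m ≠ 0)
    (b : ℤ)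
    (hsum : ∑ m : Fin (n+2), (α m)⁻¹ ≠ 0)
    (δ : ℝ) (hδ : 0 < δ) (lam lam' : ℝ → ℝ)
    (hdiff : ∀ a ∈ Set.Ioo (1 - δ) (1 + δ), HasDerivAt lam (lam' a) a)
    (h1 : lam 1 = 0)
    (hroot : ∀ a ∈ Set.Ioo (1 - δ) (1 + δ),
      ∏ m : Fin (n+2), (lam a + a * α m) = (b : ℝ)) :
    lam' 1 = -((n+2 : ℕ) : ℝ) / (∑ m : Fin (n+2), (α m)⁻¹) := by
  have h1mem : (1:ℝ) ∈ Set.Ioo (1 - δ) (1 + δ) := ⟨by linarith, by linarith⟩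
  have hg : HasDerivAt (fun a => ∏ m : Fin (n+2), (lam a + a * α m))
      (∑ m : Fin (n+2), (∏ j ∈ Finset.univ.erase m, (lam 1 + 1 * α j)) • (lam' 1 + 1 * α m)) 1 := by
    apply HasDerivAt.fun_finsetProd
    intro m _
    exact (hdiff 1 h1mem).add ((hasDerivAt_id 1).mul_const (α m))
  have heq : (fun a => ∏ m : Fin (n+2), (lam a + a * α m)) =ᶠ[nhds 1] fun _ => (b : ℝ) :=
    Filter.eventuallyEq_of_mem (Ioo_mem_nhds h1mem.1 h1mem.2) hroot
  have hzero : (∑ m : Fin (n+2), (∏ j ∈ Finset.univ.erase m, (lam 1 + 1 * α j)) • (lam' 1 + 1 * α m)) = 0 :=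
    hg.unique ((hasDerivAt_const (1:ℝ) ((b:ℝ))).congr_of_eventuallyEq heq)
  have hprodne : (∏ m : Fin (n+2), α m) ≠ 0 := Finset.prod_ne_zero_iff.mpr fun m _ => hα m
  rw [h1] at hzero
  simp only [zero_add, one_mul, smul_eq_mul] at hzero
  have hterm : ∀ m : Fin (n+2), (∏ j ∈ Finset.univ.erase m, α j) * (lam' 1 + α m)
      = (∏ j : Fin (n+2), α j) * lam' 1 * (α m)⁻¹ + (∏ j : Fin (n+2), α j) := by
    intro m
    have he := Finset.prod_erase_mul Finset.univ α (Finset.mem_univ m)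
    have hthis : (∏ j ∈ Finset.univ.erase m, α j) = (∏ j : Fin (n+2), α j) * (α m)⁻¹ := by
      rw [← he, mul_assoc, mul_inv_cancel₀ (hα m), mul_one]
    rw [hthis]
    have hinv : (α m)⁻¹ * α m = 1 := inv_mul_cancel₀ (hα m)
    linear_combination (∏ j : Fin (n+2), α j) * hinv
  rw [Finset.sum_congr rfl (fun m _ => hterm m), Finset.sum_add_distrib, ← Finset.mul_sum,
    Finset.sum_const, Finset.card_univ, Fintype.card_fin, nsmul_eq_mul] at hzero
  have hz2 : (∏ j : Fin (n+2), α j) * (lam' 1 * (∑ m : Fin (n+2), (α m)⁻¹) + ((n+2 : ℕ) : ℝ)) = 0 := by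
    push_cast at hzero ⊢
    ring_nf
    ring_nf at hzero
    linarith [hzero]
  have hz3 := (mul_eq_zero.mp hz2).resolve_left hprodne
  rw [eq_div_iff hsum]
  linarith [hz3]

/-- **Transverse crossing of the zero eigenvalue at `a = 1` (Proposition 3.2(i),
derivative formula (3.12)).** If `(−1)^{N_aut} = β`, `Σ_m 1/α_m ≠ 0`, and
`λ : (1−δ, 1+δ) → ℝ` is a differentiable eigenvalue branch with `λ(1) = 0` and
`det(λ(a)·I − A(a)) = 0`, then `λ'(1) = −N / (Σ_m 1/α_m)`, minus the harmonic
mean of the `α_m`. -/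
theorem zero_eigenvalue_crossing_derivative (N : ℕ) (hN : 3 ≤ N)
    (α : Fin N → ℝ) (hα : ∀ m, α m ≠ 0) (hprod : ∏ m : Fin N, |α m| = 1)
    (b : ℤ) (hb : b = 1 ∨ b = -1) (hpar : (-1 : ℤ) ^ (NautOf α) = b)
    (hsum : ∑ m : Fin N, (α m)⁻¹ ≠ 0)
    (δ : ℝ) (hδ : 0 < δ) (lam lam' : ℝ → ℝ)
    (hdiff : ∀ a ∈ Set.Ioo (1 - δ) (1 + δ), HasDerivAt lam (lam' a) a)
    (h1 : lam 1 = 0)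
    (hroot : ∀ a ∈ Set.Ioo (1 - δ) (1 + δ),
      Matrix.det (lam a • (1 : Matrix (Fin N) (Fin N) ℝ) - Acyc N α (b : ℝ) a) = 0) :
    lam' 1 = -(N : ℝ) / (∑ m : Fin N, (α m)⁻¹) := by
  obtain ⟨n, rfl⟩ : ∃ n, N = n + 2 := ⟨N - 2, by omega⟩
  have hroot' : ∀ a ∈ Set.Ioo (1 - δ) (1 + δ),
      ∏ m : Fin (n+2), (lam a + a * α m) = (b : ℝ) := by
    intro a ha
    have hMeq : lam a • (1 : Matrix (Fin (n+2)) (Fin (n+2)) ℝ) - Acyc (n+2) α (b : ℝ) a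
        = Matrix.of fun i j => if j = i then (lam a + a * α i)
            else if i = j + 1 then -(if i = 0 then (b : ℝ) else 1) else 0 := by
      ext i j
      simp only [Matrix.sub_apply, Matrix.smul_apply, Matrix.one_apply, Acyc,
        Matrix.of_apply, smul_eq_mul]
      by_cases hji : j = i
      · subst hji
        simp
      · rw [if_neg (fun hh : i = j => hji hh.symm), if_neg hji, if_neg hji]
        have hcond : (((j : ℕ) + 1) % (n+2) = (i : ℕ)) ↔ i = j + 1 := by
          rw [Fin.ext_iff, Fin.val_add, Fin.val_one]
          omega
        have hzero : ((i : ℕ) = 0) ↔ i = 0 := by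
          rw [Fin.ext_iff, Fin.val_zero]
        by_cases hc : i = j + 1
        · rw [if_pos (hcond.mpr hc), if_pos hc]
          simp only [hzero]
          ring
        · rw [if_neg (fun hh => hc (hcond.mp hh)), if_neg hc]
          ring
    have hd := hroot a ha
    rw [hMeq, det_cyc_aux] at hd
    linarith
  exact deriv_of_const_prod n α hα b hsum δ hδ lam lam' hdiff h1 hroot'
end

section
/- Kernel eigenvector of A(1) and its zero number (Proposition 3.2(i), equation (3.10)). Let A(a) be the normalized N-cycle matrix defined in the context and assume (−1)^{N_aut} = β. Define ξ ∈ ℝ^N by ξ_1 := 1 and ξ_m := ξ_{m−1}/α_m for 2 ≤ m ≤ N. Then A(1)·ξ = 0, and the twisted cyclic sign-change count z(ξ) := #{1 ≤ m ≤ N−1 : ξ_m·ξ_{m+1} < 0} + (1 if β·ξ_N·ξ_1 < 0, and 0 otherwise) equals N_aut. -/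
open scoped BigOperators

/-- **Kernel eigenvector of `A(1)` and its zero number (Proposition 3.2(i),
equation (3.10)).** If `(−1)^{N_aut} = β` and `ξ` is defined by `ξ_1 = 1`,
`ξ_m = ξ_{m−1}/α_m` (0-indexed: `ξ 0 = 1`, `ξ m = ξ (m-1) / α m` for `m ≥ 1`),
then `A(1)·ξ = 0` and the twisted cyclic sign-change count `z(ξ)` equals `N_aut`. -/
theorem kernel_eigenvector_zero_number (N : ℕ) (hN : 3 ≤ N)
    (α : Fin N → ℝ) (hα : ∀ m, α m ≠ 0) (hprod : ∏ m : Fin N, |α m| = 1)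
    (b : ℤ) (hb : b = 1 ∨ b = -1) (hpar : (-1 : ℤ) ^ (NautOf α) = b)
    (ξ : Fin N → ℝ) (hξ0 : ξ ⟨0, by omega⟩ = 1)
    (hξ : ∀ m : Fin N, 1 ≤ (m : ℕ) → ξ m = ξ ⟨(m : ℕ) - 1, by omega⟩ / α m) :
    Matrix.mulVec (Acyc N α (b : ℝ) 1) ξ = 0 ∧
    (Finset.univ.filter fun m : Fin N =>
        (m : ℕ) + 1 < N ∧
        ξ m * ξ ⟨((m : ℕ) + 1) % N, Nat.mod_lt _ (by omega)⟩ < 0).card +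
      (if (b : ℝ) * ξ ⟨N - 1, by omega⟩ * ξ ⟨0, by omega⟩ < 0 then 1 else 0) =
      NautOf α := by
  have hN0 : 0 < N := by omega
  have hbne : (b : ℝ) ≠ 0 := by rcases hb with h | h <;> simp [h]
  -- ξ is nowhere zero
  have hξne : ∀ m : Fin N, ξ m ≠ 0 := by
    rintro ⟨n, hn⟩
    induction n with
    | zero => rw [hξ0]; norm_num
    | succ k ih =>
      have h1 : ξ ⟨k + 1, hn⟩ = ξ ⟨k, by omega⟩ / α ⟨k + 1, hn⟩ :=
        hξ ⟨k + 1, hn⟩ (by simp)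
      rw [h1]
      exact div_ne_zero (ih (by omega)) (hα _)
  -- product formula
  have key : ∀ n (hn : n < N),
      (∏ k ∈ Finset.univ.filter (fun k : Fin N => (k : ℕ) ≤ n), α k) * ξ ⟨n, hn⟩
        = α ⟨0, hN0⟩ := by
    intro n
    induction n with
    | zero =>
      intro hn
      have hf : Finset.univ.filter (fun k : Fin N => (k : ℕ) ≤ 0) = {⟨0, hN0⟩} := by
        ext k
        simp [Fin.ext_iff, Nat.le_zero]
      rw [hf, Finset.prod_singleton, hξ0, mul_one]
    | succ k ih =>
      intro hn
      have hk : k < N := by omega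
      have hins : Finset.univ.filter (fun j : Fin N => (j : ℕ) ≤ k + 1)
          = insert (⟨k + 1, hn⟩ : Fin N)
              (Finset.univ.filter (fun j : Fin N => (j : ℕ) ≤ k)) := by
        ext j
        simp only [Finset.mem_filter, Finset.mem_insert, Finset.mem_univ, true_and,
          Fin.ext_iff]
        omega
      have hnot : (⟨k + 1, hn⟩ : Fin N) ∉
          Finset.univ.filter (fun j : Fin N => (j : ℕ) ≤ k) := by simp
      have h1 : ξ ⟨k + 1, hn⟩ = ξ ⟨k, hk⟩ / α ⟨k + 1, hn⟩ :=
        hξ ⟨k + 1, hn⟩ (by simp)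
      rw [hins, Finset.prod_insert hnot, h1]
      have hane : α ⟨k + 1, hn⟩ ≠ 0 := hα _
      field_simp
      linear_combination ih hk
  have huniv : Finset.univ.filter (fun k : Fin N => (k : ℕ) ≤ N - 1) = Finset.univ := by
    ext k
    have := k.isLt
    simp only [Finset.mem_filter, Finset.mem_univ, true_and, iff_true]
    omega
  -- product of α equals b
  have hprodsign : (∏ m : Fin N, α m) = (b : ℝ) := by
    have h1 : ∀ m : Fin N, α m = (if α m < 0 then (-1 : ℝ) else 1) * |α m| := by
      intro m
      rcases lt_or_gt_of_ne (hα m) with h | h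
      · simp [h, abs_of_neg h]
      · simp [abs_of_pos h, not_lt.mpr h.le]
    calc (∏ m : Fin N, α m)
        = ∏ m : Fin N, ((if α m < 0 then (-1 : ℝ) else 1) * |α m|) :=
          Finset.prod_congr rfl fun m _ => h1 m
      _ = (∏ m : Fin N, (if α m < 0 then (-1 : ℝ) else 1)) * ∏ m : Fin N, |α m| :=
          Finset.prod_mul_distrib
      _ = (-1 : ℝ) ^ (NautOf α) := by
          rw [hprod, mul_one, Finset.prod_ite, Finset.prod_const, Finset.prod_const,
            one_pow, mul_one, NautOf]
      _ = (b : ℝ) := by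
          have := hpar
          push_cast [← this]
          norm_num
  have hlast : (b : ℝ) * ξ ⟨N - 1, by omega⟩ = α ⟨0, hN0⟩ := by
    have h := key (N - 1) (by omega)
    rw [huniv, hprodsign] at h
    exact h
  constructor
  · -- mulVec = 0
    funext i
    show ∑ j, Acyc N α (b : ℝ) 1 i j * ξ j = 0
    rcases Nat.eq_zero_or_pos (i : ℕ) with h0 | hpos
    · have hi : i = ⟨0, hN0⟩ := Fin.ext h0
      subst hi
      have hsub : ∑ j, Acyc N α (b : ℝ) 1 ⟨0, hN0⟩ j * ξ j
          = ∑ j ∈ ({⟨0, hN0⟩, ⟨N - 1, by omega⟩} : Finset (Fin N)),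
              Acyc N α (b : ℝ) 1 ⟨0, hN0⟩ j * ξ j := by
        refine (Finset.sum_subset (Finset.subset_univ _) ?_).symm
        intro j _ hj
        simp only [Finset.mem_insert, Finset.mem_singleton] at hj
        push_neg at hj
        obtain ⟨hj1, hj2⟩ := hj
        have hj1' : ¬ (j = (⟨0, hN0⟩ : Fin N)) := hj1
        have hjlt := j.isLt
        have hmod : ((j : ℕ) + 1) % N ≠ 0 := by
          have : (j : ℕ) + 1 < N := by
            rcases Nat.lt_or_ge ((j : ℕ) + 1) N with h | h
            · exact h
            · exfalso; exact hj2 (Fin.ext (show (j : ℕ) = N - 1 by omega))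
          rw [Nat.mod_eq_of_lt this]; omega
        simp only [Acyc, Matrix.of_apply]
        rw [if_neg hj1', if_neg (by simpa using hmod)]
        ring
      rw [hsub, Finset.sum_pair (by simp [Fin.ext_iff]; omega)]
      have hA1 : Acyc N α (b : ℝ) 1 ⟨0, hN0⟩ ⟨0, hN0⟩ = -(α ⟨0, hN0⟩) := by
        simp [Acyc]
      have hA2 : Acyc N α (b : ℝ) 1 ⟨0, hN0⟩ ⟨N - 1, by omega⟩ = (b : ℝ) := by
        have hc : (((⟨N - 1, by omega⟩ : Fin N) : ℕ) + 1) % N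
            = ((⟨0, hN0⟩ : Fin N) : ℕ) := by
          show (N - 1 + 1) % N = 0
          rw [Nat.sub_add_cancel (by omega), Nat.mod_self]
        simp only [Acyc, Matrix.of_apply]
        rw [if_neg (by simp [Fin.ext_iff]; omega), if_pos hc]
        simp
      rw [hA1, hA2, hξ0, mul_one, hlast]
      ring
    · -- i ≥ 1
      have hip : 1 ≤ (i : ℕ) := hpos
      have hsub : ∑ j, Acyc N α (b : ℝ) 1 i j * ξ j
          = ∑ j ∈ ({i, ⟨(i : ℕ) - 1, by omega⟩} : Finset (Fin N)),
              Acyc N α (b : ℝ) 1 i j * ξ j := by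
        refine (Finset.sum_subset (Finset.subset_univ _) ?_).symm
        intro j _ hj
        simp only [Finset.mem_insert, Finset.mem_singleton] at hj
        push_neg at hj
        obtain ⟨hj1, hj2⟩ := hj
        have hjlt := j.isLt
        have hilt := i.isLt
        have hmod : ((j : ℕ) + 1) % N ≠ (i : ℕ) := by
          rcases Nat.lt_or_ge ((j : ℕ) + 1) N with h | h
          · rw [Nat.mod_eq_of_lt h]
            intro hc
            exact hj2 (Fin.ext (show (j : ℕ) = (i : ℕ) - 1 by omega))
          · have : (j : ℕ) + 1 = N := by omega
            rw [this, Nat.mod_self]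
            omega
        simp only [Acyc, Matrix.of_apply]
        rw [if_neg hj1, if_neg hmod]
        ring
      have hne2 : i ≠ (⟨(i : ℕ) - 1, by omega⟩ : Fin N) := by
        simp [Fin.ext_iff]; omega
      rw [hsub, Finset.sum_pair hne2]
      have hA1 : Acyc N α (b : ℝ) 1 i i = -(α i) := by simp [Acyc]
      have hA2 : Acyc N α (b : ℝ) 1 i ⟨(i : ℕ) - 1, by omega⟩ = 1 := by
        have hilt := i.isLt
        simp only [Acyc, Matrix.of_apply]
        rw [if_neg (Ne.symm hne2), if_pos (by simp [Nat.sub_add_cancel hip, Nat.mod_eq_of_lt hilt]),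
          if_neg (by omega)]
      have h1 : ξ i = ξ ⟨(i : ℕ) - 1, by omega⟩ / α i := hξ i hip
      have hai := hα i
      rw [hA1, hA2, h1, one_mul]
      field_simp
      ring
  · -- sign count
    have hstep : ∀ (m : Fin N) (hm : (m : ℕ) + 1 < N),
        (ξ m * ξ ⟨((m : ℕ) + 1) % N, Nat.mod_lt _ (by omega)⟩ < 0 ↔ α ⟨(m : ℕ) + 1, hm⟩ < 0) := by
      intro m hm
      have hmod : ((m : ℕ) + 1) % N = (m : ℕ) + 1 := Nat.mod_eq_of_lt hm
      have hx : (⟨((m : ℕ) + 1) % N, Nat.mod_lt _ (by omega)⟩ : Fin N) = ⟨(m : ℕ) + 1, hm⟩ :=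
        Fin.ext hmod
      have h1 : ξ ⟨(m : ℕ) + 1, hm⟩ = ξ m / α ⟨(m : ℕ) + 1, hm⟩ := by
        have h := hξ ⟨(m : ℕ) + 1, hm⟩ (by simp)
        simpa using h
      rw [hx, h1]
      have hsq : 0 < ξ m ^ 2 := by
        have := hξne m
        positivity
      rw [show ξ m * (ξ m / α ⟨(m : ℕ) + 1, hm⟩) = ξ m ^ 2 / α ⟨(m : ℕ) + 1, hm⟩ by ring,
        div_neg_iff]
      constructor
      · rintro (⟨_, h⟩ | ⟨h, _⟩)
        · exact h
        · linarith
      · intro h; exact Or.inl ⟨hsq, h⟩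
    -- the two cards
    have hcard : (Finset.univ.filter fun m : Fin N =>
          (m : ℕ) + 1 < N ∧
          ξ m * ξ ⟨((m : ℕ) + 1) % N, Nat.mod_lt _ (by omega)⟩ < 0).card
        = (Finset.univ.filter fun m : Fin N => 0 < (m : ℕ) ∧ α m < 0).card := by
      apply Finset.card_nbij
        (fun m : Fin N => (⟨((m : ℕ) + 1) % N, Nat.mod_lt _ (by omega)⟩ : Fin N))
      · intro m hm
        simp only [Finset.coe_filter, Set.mem_setOf_eq, Finset.mem_filter, Finset.mem_univ, true_and] at hm ⊢
        obtain ⟨h1, h2⟩ := hm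
        have hmod : ((m : ℕ) + 1) % N = (m : ℕ) + 1 := Nat.mod_eq_of_lt h1
        refine ⟨show 0 < ((m : ℕ) + 1) % N by omega, ?_⟩
        have h3 := (hstep m h1).mp h2
        have he : (⟨((m : ℕ) + 1) % N, Nat.mod_lt _ (by omega)⟩ : Fin N) = ⟨(m : ℕ) + 1, h1⟩ :=
          Fin.ext hmod
        rw [he]
        exact h3
      · intro m1 hm1 m2 hm2 he
        simp only [Finset.coe_filter, Set.mem_setOf_eq, Finset.mem_univ, true_and] at hm1 hm2
        have e1 : ((m1 : ℕ) + 1) % N = (m1 : ℕ) + 1 := Nat.mod_eq_of_lt hm1.1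
        have e2 : ((m2 : ℕ) + 1) % N = (m2 : ℕ) + 1 := Nat.mod_eq_of_lt hm2.1
        have hv : ((m1 : ℕ) + 1) % N = ((m2 : ℕ) + 1) % N := congrArg Fin.val he
        apply Fin.ext
        omega
      · intro t ht
        simp only [Finset.coe_filter, Set.mem_setOf_eq, Finset.mem_univ, true_and] at ht
        obtain ⟨ht1, ht2⟩ := ht
        have htlt := t.isLt
        refine ⟨⟨(t : ℕ) - 1, by omega⟩, ?_, ?_⟩
        · simp only [Finset.coe_filter, Set.mem_setOf_eq, Finset.mem_univ, true_and]
          have hm0 : ((⟨(t : ℕ) - 1, by omega⟩ : Fin N) : ℕ) = (t : ℕ) - 1 := rfl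
          have hmlt : ((⟨(t : ℕ) - 1, by omega⟩ : Fin N) : ℕ) + 1 < N := by omega
          refine ⟨hmlt, ?_⟩
          rw [hstep ⟨(t : ℕ) - 1, by omega⟩ hmlt]
          have he : (⟨((⟨(t : ℕ) - 1, by omega⟩ : Fin N) : ℕ) + 1, hmlt⟩ : Fin N) = t :=
            Fin.ext (by simp only [Fin.val_mk]; omega)
          rw [he]
          exact ht2
        · apply Fin.ext
          show (((t : ℕ) - 1) + 1) % N = (t : ℕ)
          rw [Nat.mod_eq_of_lt (by omega)]
          omega
    rw [hcard]
    -- wrap term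
    have hwrap : ((if (b : ℝ) * ξ ⟨N - 1, by omega⟩ * ξ ⟨0, by omega⟩ < 0 then 1 else 0) : ℕ)
        = if α ⟨0, hN0⟩ < 0 then 1 else 0 := by
      have : (b : ℝ) * ξ ⟨N - 1, by omega⟩ * ξ ⟨0, by omega⟩ = α ⟨0, hN0⟩ := by
        rw [hξ0, mul_one, hlast]
      rw [this]
    rw [hwrap]
    -- final count identity
    rw [NautOf]
    classical
    rw [Finset.card_filter, Finset.card_filter]
    have hsplit : ∀ m : Fin N,
        (if α m < 0 then (1 : ℕ) else 0)
          = (if 0 < (m : ℕ) ∧ α m < 0 then 1 else 0)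
            + (if (m : ℕ) = 0 ∧ α m < 0 then 1 else 0) := by
      intro m
      rcases Nat.eq_zero_or_pos (m : ℕ) with h | h
      · simp [h]
      · simp [h, Nat.pos_iff_ne_zero.mp h]
    rw [Finset.sum_congr rfl fun m _ => hsplit m, Finset.sum_add_distrib]
    have hsingle : ∑ m : Fin N, (if (m : ℕ) = 0 ∧ α m < 0 then (1 : ℕ) else 0)
        = if α ⟨0, hN0⟩ < 0 then 1 else 0 := by
      rw [Finset.sum_eq_single (⟨0, hN0⟩ : Fin N)]
      · simp
      · intro m _ hm
        rw [if_neg]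
        rintro ⟨h1, _⟩
        exact hm (Fin.ext h1)
      · simp
    rw [hsingle]
end

section
/- Spectrum of the normalized N-cycle matrix at a = 0 and its derivative (Proposition 3.2(ii)). Let A(a) be the normalized N-cycle matrix defined in the context, regarded as a complex matrix. Then: (a) the eigenvalues of A(0) are exactly the N complex solutions of λ^N = β, and each is an algebraically simple root of the characteristic polynomial of A(0); (b) if δ > 0 and λ : [0,δ) → ℂ is differentiable with λ(0)^N = β and det(λ(a)·I_N − A(a)) = 0 for all a ∈ [0,δ), then the one-sided derivative satisfies λ'(0) = −(1/N)·Σ_{m=1}^N α_m. -/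
open scoped BigOperators

lemma fin_val_add_one {N : ℕ} [NeZero N] (hN : 2 ≤ N) (i : Fin N) :
    ((i + 1 : Fin N) : ℕ) = ((i : ℕ) + 1) % N := by
  obtain ⟨n, rfl⟩ : ∃ n, N = n + 2 := ⟨N - 2, by omega⟩
  simp [Fin.val_add]

lemma fin_succ_ne_self {N : ℕ} [NeZero N] (hN : 2 ≤ N) (i : Fin N) : i + 1 ≠ i := by
  intro h
  have h2 := congrArg Fin.val h
  rw [fin_val_add_one hN] at h2
  have hi : (i : ℕ) < N := i.isLt
  rcases Nat.lt_or_ge ((i : ℕ) + 1) N with h' | h'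
  · rw [Nat.mod_eq_of_lt h'] at h2; omega
  · have : (i : ℕ) + 1 = N := by omega
    rw [this, Nat.mod_self] at h2; omega

open Fin.CommRing in
lemma perm_cases {N : ℕ} [NeZero N] (hN : 2 ≤ N) (σ : Equiv.Perm (Fin N))
    (h : ∀ i, σ i = i ∨ σ i = i + 1) :
    σ = 1 ∨ ∀ i, σ i = i + 1 := by
  by_cases hid : ∀ i, σ i = i
  · left; ext i; simp [hid i]
  · right
    push_neg at hid
    obtain ⟨i₀, hi₀⟩ := hid
    have hi₀' : σ i₀ = i₀ + 1 := (h i₀).resolve_left hi₀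
    have step : ∀ i : Fin N, σ i = i + 1 → σ (i + 1) = i + 1 + 1 := by
      intro i hi
      rcases h (i + 1) with h' | h'
      · exfalso
        have heq : σ (i + 1) = σ i := by rw [h', hi]
        have := σ.injective heq
        exact fin_succ_ne_self hN i this
      · exact h'
    have key : ∀ k : ℕ, σ (i₀ + (k : Fin N)) = i₀ + (k : Fin N) + 1 := by
      intro k
      induction k with
      | zero => simpa using hi₀'
      | succ k ih =>
        have h2 := step _ ih
        have hc : (((k + 1 : ℕ)) : Fin N) = ((k : ℕ) : Fin N) + 1 := by push_cast; ring
        rw [hc, ← add_assoc]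
        exact h2
    intro j
    have hj : i₀ + (((j - i₀ : Fin N) : ℕ) : Fin N) = j := by
      rw [Fin.cast_val_eq_self]; ring
    rw [← hj]
    exact key _

lemma det_cyc {N : ℕ} (hN : 2 ≤ N) (d : Fin N → ℂ) (c : ℂ) :
    (Matrix.of fun i j : Fin N =>
      if j = i then d i
      else if ((j : ℕ) + 1) % N = (i : ℕ) then -(if (i : ℕ) = 0 then c else 1) else 0).det
      = (∏ i, d i) - c := by
  haveI : NeZero N := ⟨by omega⟩
  obtain ⟨n, hn⟩ : ∃ n, N = n + 2 := ⟨N - 2, by omega⟩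
  set M : Matrix (Fin N) (Fin N) ℂ := Matrix.of fun i j : Fin N =>
      if j = i then d i
      else if ((j : ℕ) + 1) % N = (i : ℕ) then -(if (i : ℕ) = 0 then c else 1) else 0 with hM
  have hdiag : ∀ i, M i i = d i := by intro i; simp [hM]
  have hsub : ∀ i : Fin N, M (i + 1) i = -(if ((i + 1 : Fin N) : ℕ) = 0 then c else 1) := by
    intro i
    have h1 : i ≠ i + 1 := (fin_succ_ne_self hN i).symm
    have h2 : ((i : ℕ) + 1) % N = ((i + 1 : Fin N) : ℕ) := (fin_val_add_one hN i).symm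
    simp only [hM, Matrix.of_apply]
    rw [if_neg h1, if_pos h2]
  have hzero : ∀ (i r : Fin N), r ≠ i → r ≠ i + 1 → M r i = 0 := by
    intro i r h1 h2
    have h3 : ¬ (((i : ℕ) + 1) % N = (r : ℕ)) := by
      intro h
      apply h2
      apply Fin.ext
      rw [fin_val_add_one hN i, ← h]
    simp only [hM, Matrix.of_apply]
    rw [if_neg (fun h => h1 ((Fin.ext_iff.mpr (congrArg Fin.val h)).symm)), if_neg h3]
  have hrotne : (1 : Equiv.Perm (Fin N)) ≠ finRotate N := by
    intro h
    have h0 := Equiv.ext_iff.mp h 0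
    subst hn
    rw [finRotate_succ_apply] at h0
    simp only [Equiv.Perm.coe_one, id_eq] at h0
    exact fin_succ_ne_self hN 0 h0.symm
  rw [Matrix.det_apply]
  rw [← Finset.sum_subset (Finset.subset_univ ({1, finRotate N} : Finset (Equiv.Perm (Fin N))))]
  · rw [Finset.sum_pair hrotne]
    have t1 : (Equiv.Perm.sign (1 : Equiv.Perm (Fin N))) • ∏ i, M ((1 : Equiv.Perm (Fin N)) i) i
        = ∏ i, d i := by
      simp [hdiag]
    have t2 : (Equiv.Perm.sign (finRotate N)) • ∏ i, M ((finRotate N) i) i = -c := by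
      have hrotapp : ∀ i : Fin N, (finRotate N) i = i + 1 := by
        subst hn; intro i; rw [finRotate_succ_apply]
      have hprod : ∏ i, M ((finRotate N) i) i = (-1 : ℂ) ^ N * c := by
        have he : ∀ i : Fin N, M ((finRotate N) i) i
            = (-1) * (if ((i + 1 : Fin N) : ℕ) = 0 then c else 1) := by
          intro i; rw [hrotapp, hsub i]; ring
        rw [Finset.prod_congr rfl (fun i _ => he i), Finset.prod_mul_distrib,
          Finset.prod_const]
        congr 1
        · simp
        · rw [Fintype.prod_equiv (Equiv.addRight (1 : Fin N))
            (fun i => if ((i + 1 : Fin N) : ℕ) = 0 then c else 1)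
            (fun j => if (j : ℕ) = 0 then c else 1) (fun i => by simp [Equiv.coe_addRight])]
          have hcond : ∀ j : Fin N, (if (j : ℕ) = 0 then c else 1) = (if j = 0 then c else 1) := by
            intro j
            congr 1
            exact propext ⟨fun h => Fin.ext (by simp [h]), fun h => by simp [h]⟩
          rw [Finset.prod_congr rfl (fun j _ => hcond j)]
          rw [Finset.prod_ite_eq' Finset.univ (0 : Fin N) (fun _ => c)]
          simp
      have hsign : Equiv.Perm.sign (finRotate N) = (-1 : ℤˣ) ^ (n + 1) := by
        subst hn; rw [sign_finRotate]; rfl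
      rw [hprod, hsign]
      have hcast : (((-1 : ℤˣ) ^ (n + 1) : ℤˣ) : ℤ) = (-1 : ℤ) ^ (n + 1) := by
        push_cast; ring
      rw [Units.smul_def, hcast, zsmul_eq_mul]
      push_cast
      rw [← mul_assoc, ← pow_add]
      have hodd : n + 1 + N = 2 * (n + 1) + 1 := by omega
      rw [hodd, pow_succ, pow_mul, neg_one_sq, one_pow, one_mul, neg_one_mul]
    rw [t1, t2]
    ring
  · intro σ _ hσ
    have hnot : ¬ ∀ i, σ i = i ∨ σ i = i + 1 := by
      intro hall
      rcases perm_cases hN σ hall with h | h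
      · exact hσ (by simp [h])
      · apply hσ
        have heq : σ = finRotate N := by
          apply Equiv.ext; intro i
          rw [h i]
          subst hn; rw [finRotate_succ_apply]
        simp [heq]
    push_neg at hnot
    obtain ⟨i, hi1, hi2⟩ := hnot
    have hp : ∏ i, M (σ i) i = 0 :=
      Finset.prod_eq_zero (Finset.mem_univ i) (hzero i (σ i) hi1 hi2)
    rw [hp]
    simp

lemma eval_charpoly {n : ℕ} (M : Matrix (Fin n) (Fin n) ℂ) (z : ℂ) :
    (Matrix.charpoly M).eval z
      = (z • (1 : Matrix (Fin n) (Fin n) ℂ) - M).det := by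
  rw [Matrix.charpoly, ← Polynomial.coe_evalRingHom, RingHom.map_det]
  congr 1
  ext i j
  by_cases h : i = j
  · subst h
    simp [Matrix.charmatrix_apply_eq, Matrix.sub_apply, Matrix.smul_apply, Matrix.one_apply]
  · simp [Matrix.charmatrix_apply_ne _ _ _ h, Matrix.sub_apply, Matrix.smul_apply,
      Matrix.one_apply, h]

lemma key_det {N : ℕ} (hN : 2 ≤ N) (α : Fin N → ℝ) (β : ℝ) (a : ℝ) (z : ℂ) :
    (z • (1 : Matrix (Fin N) (Fin N) ℂ) - (Acyc N α β a).map (algebraMap ℝ ℂ)).det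
      = (∏ m, (z + (a : ℂ) * (α m : ℂ))) - (β : ℂ) := by
  have hmat : z • (1 : Matrix (Fin N) (Fin N) ℂ) - (Acyc N α β a).map (algebraMap ℝ ℂ)
      = Matrix.of fun i j : Fin N =>
        if j = i then (z + (a : ℂ) * (α i : ℂ))
        else if ((j : ℕ) + 1) % N = (i : ℕ) then -(if (i : ℕ) = 0 then (β : ℂ) else 1)
        else 0 := by
    ext i j
    simp only [Matrix.sub_apply, Matrix.smul_apply, Matrix.one_apply, Matrix.map_apply,
      Matrix.of_apply, Acyc, smul_eq_mul, Complex.coe_algebraMap]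
    by_cases h : j = i
    · subst h
      simp
    · by_cases h2 : ((j : ℕ) + 1) % N = (i : ℕ)
      · have h' : ¬ i = j := fun hh => h hh.symm
        by_cases h3 : (i : ℕ) = 0 <;> simp [h, h2, h3, h']
      · have h' : ¬ i = j := fun hh => h hh.symm
        simp [h, h2, h']
  rw [hmat, det_cyc hN]

/-- **Spectrum of the normalized N-cycle matrix at `a = 0` and its derivative
(Proposition 3.2(ii)).** (a) The eigenvalues of `A(0)` are exactly the solutions
of `λ^N = β`, each an algebraically simple root of the characteristic
polynomial. (b) Any differentiable root branch `λ : [0,δ) → ℂ` with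
`λ(0)^N = β` has one-sided derivative `λ'(0) = −(1/N)·Σ_m α_m`. -/
theorem Acyc_spectrum_at_zero (N : ℕ) (hN : 3 ≤ N)
    (α : Fin N → ℝ) (hα : ∀ m, α m ≠ 0) (hprod : ∏ m : Fin N, |α m| = 1)
    (b : ℤ) (hb : b = 1 ∨ b = -1) :
    (∀ z : ℂ, z ∈ specC (Acyc N α (b : ℝ) 0) ↔ z ^ N = (b : ℂ)) ∧
    (∀ z : ℂ, z ^ N = (b : ℂ) →
      Polynomial.rootMultiplicity z
        (Matrix.charpoly ((Acyc N α (b : ℝ) 0).map (algebraMap ℝ ℂ))) = 1) ∧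
    (∀ δ : ℝ, 0 < δ → ∀ lam lam' : ℝ → ℂ,
      (∀ a ∈ Set.Ico (0 : ℝ) δ, HasDerivWithinAt lam (lam' a) (Set.Ico (0 : ℝ) δ) a) →
      (lam 0) ^ N = (b : ℂ) →
      (∀ a ∈ Set.Ico (0 : ℝ) δ,
        Matrix.det (lam a • (1 : Matrix (Fin N) (Fin N) ℂ) -
          (Acyc N α (b : ℝ) a).map (algebraMap ℝ ℂ)) = 0) →
      lam' 0 = -(1 / (N : ℂ)) * ∑ m : Fin N, (α m : ℂ)) := by
  have hN2 : 2 ≤ N := by omega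
  have hb0 : (b : ℂ) ≠ 0 := by rcases hb with h | h <;> simp [h]
  have hbc : (((b : ℝ)) : ℂ) = (b : ℂ) := by push_cast; ring
  set p := Matrix.charpoly ((Acyc N α (b : ℝ) 0).map (algebraMap ℝ ℂ)) with hp
  have hev : ∀ z : ℂ, p.eval z = z ^ N - (b : ℂ) := by
    intro z
    rw [hp, eval_charpoly, key_det hN2, hbc]
    congr 1
    have : ∀ m : Fin N, z + ((0 : ℝ) : ℂ) * (α m : ℂ) = z := by intro m; simp
    rw [Finset.prod_congr rfl (fun m _ => this m), Finset.prod_const, Finset.card_univ,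
      Fintype.card_fin]
  have hpeq : p = Polynomial.X ^ N - Polynomial.C (b : ℂ) := by
    apply Polynomial.funext
    intro r
    rw [hev r]
    simp
  have hq0 : (Polynomial.X ^ N - Polynomial.C (b : ℂ)) ≠ 0 := by
    intro h
    have h2 := congrArg (Polynomial.eval 0) h
    simp [zero_pow (by omega : N ≠ 0)] at h2
    rcases hb with h | h <;> omega
  have hroot : ∀ z : ℂ, (Polynomial.X ^ N - Polynomial.C (b : ℂ)).IsRoot z ↔ z ^ N = (b : ℂ) := by
    intro z
    simp [Polynomial.IsRoot, sub_eq_zero]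
  refine ⟨?_, ?_, ?_⟩
  · intro z
    unfold specC
    rw [← hp, hpeq, Polynomial.mem_roots hq0, hroot]
  · intro z hz
    rw [show Polynomial.rootMultiplicity z
        (Matrix.charpoly ((Acyc N α (b : ℝ) 0).map (algebraMap ℝ ℂ)))
        = Polynomial.rootMultiplicity z p from rfl, hpeq]
    have hsep : (Polynomial.X ^ N - Polynomial.C (b : ℂ)).Separable :=
      Polynomial.separable_X_pow_sub_C (b : ℂ) (Nat.cast_ne_zero.mpr (by omega)) hb0
    have hnodup := Polynomial.nodup_roots hsep
    have hcount := Polynomial.count_roots (a := z) (Polynomial.X ^ N - Polynomial.C (b : ℂ))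
    have hmem : z ∈ (Polynomial.X ^ N - Polynomial.C (b : ℂ)).roots :=
      (Polynomial.mem_roots hq0).mpr ((hroot z).mpr hz)
    have h1 := Multiset.one_le_count_iff_mem.mpr hmem
    have h2 := Multiset.nodup_iff_count_le_one.mp hnodup z
    omega
  · intro δ hδ lam lam' hderiv hlam0 hdet
    have h0s : (0 : ℝ) ∈ Set.Ico (0 : ℝ) δ := ⟨le_refl 0, hδ⟩
    have hlamne : lam 0 ≠ 0 := by
      intro h
      apply hb0
      rw [← hlam0, h, zero_pow (by omega : N ≠ 0)]
    have hg : ∀ a ∈ Set.Ico (0 : ℝ) δ,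
        ∏ m : Fin N, (lam a + (a : ℂ) * (α m : ℂ)) = (b : ℂ) := by
      intro a ha
      have h1 := hdet a ha
      rw [key_det hN2, hbc] at h1
      exact sub_eq_zero.mp h1
    have hfac : ∀ m ∈ (Finset.univ : Finset (Fin N)),
        HasDerivWithinAt (fun a : ℝ => lam a + (a : ℂ) * (α m : ℂ))
          (lam' 0 + (α m : ℂ)) (Set.Ico (0 : ℝ) δ) 0 := by
      intro m _
      have h1 : HasDerivWithinAt (fun a : ℝ => (a : ℂ) * (α m : ℂ)) ((α m : ℂ))
          (Set.Ico (0 : ℝ) δ) 0 := by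
        have h2 := (Complex.ofRealCLM.hasDerivAt (x := (0 : ℝ))).mul_const ((α m : ℂ))
        simpa using h2.hasDerivWithinAt
      exact (hderiv 0 h0s).add h1
    have hgderiv : HasDerivWithinAt (fun a : ℝ => ∏ m : Fin N, (lam a + (a : ℂ) * (α m : ℂ)))
        (∑ m : Fin N, (∏ j ∈ Finset.univ.erase m, (lam 0 + ((0 : ℝ) : ℂ) * (α j : ℂ))) •
          (lam' 0 + (α m : ℂ))) (Set.Ico (0 : ℝ) δ) 0 :=
      HasDerivWithinAt.fun_finsetProd hfac
    have hconst : HasDerivWithinAt (fun a : ℝ => ∏ m : Fin N, (lam a + (a : ℂ) * (α m : ℂ)))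
        0 (Set.Ico (0 : ℝ) δ) 0 :=
      (hasDerivWithinAt_const 0 (Set.Ico (0 : ℝ) δ) ((b : ℂ))).congr hg (hg 0 h0s)
    have hud : UniqueDiffWithinAt ℝ (Set.Ico (0 : ℝ) δ) 0 := uniqueDiffOn_Ico 0 δ 0 h0s
    have heq0 : (∑ m : Fin N, (∏ j ∈ Finset.univ.erase m,
        (lam 0 + ((0 : ℝ) : ℂ) * (α j : ℂ))) • (lam' 0 + (α m : ℂ))) = 0 := by
      rw [← hgderiv.derivWithin hud, hconst.derivWithin hud]
    have hsimp : ∀ m : Fin N,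
        (∏ j ∈ Finset.univ.erase m, (lam 0 + ((0 : ℝ) : ℂ) * (α j : ℂ)))
          = lam 0 ^ (N - 1) := by
      intro m
      have : ∀ j ∈ Finset.univ.erase m, (lam 0 + ((0 : ℝ) : ℂ) * (α j : ℂ)) = lam 0 := by
        intro j _; simp
      rw [Finset.prod_congr rfl this, Finset.prod_const,
        Finset.card_erase_of_mem (Finset.mem_univ m), Finset.card_univ, Fintype.card_fin]
    have hsum : (∑ m : Fin N, (∏ j ∈ Finset.univ.erase m,
        (lam 0 + ((0 : ℝ) : ℂ) * (α j : ℂ))) • (lam' 0 + (α m : ℂ)))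
        = lam 0 ^ (N - 1) * ((N : ℂ) * lam' 0 + ∑ m : Fin N, (α m : ℂ)) := by
      have h1 : (∑ m : Fin N, (∏ j ∈ Finset.univ.erase m,
          (lam 0 + ((0 : ℝ) : ℂ) * (α j : ℂ))) • (lam' 0 + (α m : ℂ)))
          = ∑ m : Fin N, lam 0 ^ (N - 1) * (lam' 0 + (α m : ℂ)) := by
        apply Finset.sum_congr rfl
        intro m _
        rw [hsimp m, smul_eq_mul]
      rw [h1, ← Finset.mul_sum]
      congr 1
      rw [Finset.sum_add_distrib, Finset.sum_const, Finset.card_univ, Fintype.card_fin,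
        nsmul_eq_mul]
    rw [hsum] at heq0
    rcases mul_eq_zero.mp heq0 with h | h
    · exact absurd h (pow_ne_zero _ hlamne)
    · have hNc : (N : ℂ) ≠ 0 := Nat.cast_ne_zero.mpr (by omega)
      have hS : ∑ m : Fin N, ((α m : ℝ) : ℂ) = -((N : ℂ) * lam' 0) := by
        linear_combination h
      rw [hS]
      field_simp
end

section
/- Unstable dimension for small parameter a, nonresonant case (Proposition 3.3, equation (3.21)). Let A(a) be the normalized N-cycle matrix defined in the context and assume N ≢ 1−β (mod 4). Then there exists δ > 0 such that for all a ∈ (0, δ): no eigenvalue of A(a) has zero real part, and μ(A(a)) = 2·⌊(N−1+β)/4⌋ + 1 + (1−β)/2. -/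
open scoped BigOperators

open Polynomial Equiv Filter Topology

lemma fin_add_one_ne {n : ℕ} (hn : 1 ≤ n) (i : Fin (n+1)) : i + 1 ≠ i := by
  intro hi
  have h1 : (1 : Fin (n+1)) = 0 := by
    have := congrArg (· - i) hi
    simpa [add_sub_cancel_right, sub_self] using this
  rw [Fin.one_eq_zero_iff] at h1
  omega

lemma fin_succ_val {n : ℕ} (hn : 1 ≤ n) (i j : Fin (n+1)) :
    (((i : ℕ) + 1) % (n+1) = (j : ℕ)) ↔ j = i + 1 := by
  have : ((i + 1 : Fin (n+1)) : ℕ) = ((i : ℕ) + 1) % (n+1) := by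
    rw [Fin.add_def]
    congr 1
    simp [Fin.val_one']
  rw [Fin.ext_iff, this]
  exact eq_comm


open Fin.NatCast in
lemma perm_classify {n : ℕ} (hn : 1 ≤ n) (σ : Equiv.Perm (Fin (n+1)))
    (h : ∀ i, σ i = i ∨ σ i = i + 1) : σ = 1 ∨ σ = finRotate (n+1) := by
  have hne : ∀ i : Fin (n+1), i + 1 ≠ i := by
    intro i hi
    have h1 : (1 : Fin (n+1)) = 0 := by
      have := congrArg (· - i) hi
      simpa [add_sub_cancel_right, sub_self] using this
    rw [Fin.one_eq_zero_iff] at h1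
    omega
  by_cases hall : ∀ i, σ i = i
  · left; ext i; simp [hall]
  · right
    push_neg at hall
    obtain ⟨i₀, hi₀⟩ := hall
    have hi₀' : σ i₀ = i₀ + 1 := (h i₀).resolve_left hi₀
    -- closure: if σ i = i + 1 then σ (i+1) = i + 2
    have closure : ∀ i, σ i = i + 1 → σ (i+1) = i + 1 + 1 := by
      intro i hi
      rcases h (i+1) with h'|h'
      · exfalso
        have : σ i = σ (i+1) := by rw [hi, h']
        have := σ.injective this
        exact hne i this.symm
      · exact h'
    have key : ∀ k : ℕ, σ (i₀ + k) = i₀ + k + 1 := by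
      intro k
      induction k with
      | zero => simpa using hi₀'
      | succ m ih =>
        have := closure _ ih
        have hcast : ((m+1 : ℕ) : Fin (n+1)) = (m : Fin (n+1)) + 1 := by
          push_cast; ring
        rw [hcast, ← add_assoc]
        exact this
    ext j
    have : j = i₀ + ((j - i₀ : Fin (n+1)) : ℕ) := by
      rw [Fin.cast_val_eq_self]; abel
    rw [finRotate_succ_apply]
    conv_lhs => rw [this]
    rw [key]
    rw [← this]

lemma charpoly_acyc (n : ℕ) (hn : 2 ≤ n) (α : Fin (n+1) → ℝ) (β a : ℝ) :
    Matrix.charpoly ((Acyc (n+1) α β a).map (algebraMap ℝ ℂ)) =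
      (∏ m : Fin (n+1), (X + C ((a : ℂ) * (α m : ℂ)))) - C (β : ℂ) := by
  have hn1 : 1 ≤ n := by omega
  set M := Matrix.charmatrix ((Acyc (n+1) α β a).map (algebraMap ℝ ℂ)) with hM
  have hdiag : ∀ i : Fin (n+1), M i i = X + C ((a : ℂ) * (α i : ℂ)) := by
    intro i
    rw [hM, Matrix.charmatrix_apply_eq, Matrix.map_apply]
    simp only [Acyc, Matrix.of_apply, eq_self_iff_true, if_true, Complex.coe_algebraMap]
    push_cast
    rw [map_neg, sub_neg_eq_add]
  have hsub : ∀ i : Fin (n+1), M (i+1) i =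
      -C (if ((i+1 : Fin (n+1)) : ℕ) = 0 then (β : ℂ) else 1) := by
    intro i
    rw [hM, Matrix.charmatrix_apply_ne _ _ _ (fin_add_one_ne hn1 i), Matrix.map_apply]
    simp only [Acyc, Matrix.of_apply]
    rw [if_neg, if_pos ((fin_succ_val hn1 i (i+1)).mpr rfl)]
    · split <;> simp
    · intro hcontra
      exact fin_add_one_ne hn1 i hcontra.symm
  have hzero : ∀ (i j : Fin (n+1)), j ≠ i → j ≠ i + 1 → M j i = 0 := by
    intro i j h1 h2
    rw [hM, Matrix.charmatrix_apply_ne _ _ _ h1, Matrix.map_apply]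
    simp only [Acyc, Matrix.of_apply]
    rw [if_neg (show ¬ i = j from fun hc => h1 hc.symm), if_neg]
    · simp
    · intro hcontra
      exact h2 ((fin_succ_val hn1 i j).mp hcontra)
  rw [Matrix.charpoly, Matrix.det_apply]
  have hsum : ∀ σ : Perm (Fin (n+1)), σ ∉ ({1, finRotate (n+1)} : Finset (Perm (Fin (n+1)))) →
      (Equiv.Perm.sign σ) • ∏ i, M (σ i) i = 0 := by
    intro σ hσ
    simp only [Finset.mem_insert, Finset.mem_singleton] at hσ
    push_neg at hσ
    have : ∃ i, σ i ≠ i ∧ σ i ≠ i + 1 := by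
      by_contra hcon
      push_neg at hcon
      have : ∀ i, σ i = i ∨ σ i = i + 1 := by
        intro i
        by_cases h : σ i = i
        · exact Or.inl h
        · exact Or.inr (hcon i h)
      rcases perm_classify hn1 σ this with h | h
      · exact hσ.1 h
      · exact hσ.2 h
    obtain ⟨i, hi1, hi2⟩ := this
    have hz : (∏ j : Fin (n+1), M (σ j) j) = 0 :=
      Finset.prod_eq_zero (Finset.mem_univ i) (hzero i (σ i) hi1 hi2)
    rw [hz]
    simp
  rw [← Finset.sum_subset (Finset.subset_univ ({1, finRotate (n+1)} : Finset (Perm (Fin (n+1)))))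
    (fun σ _ h => hsum σ h)]
  have hne : (1 : Perm (Fin (n+1))) ≠ finRotate (n+1) := by
    intro hcontra
    have h0 : (finRotate (n+1)) 0 = 0 := by rw [← hcontra]; rfl
    rw [finRotate_succ_apply, zero_add] at h0
    rw [Fin.one_eq_zero_iff] at h0
    omega
  rw [Finset.sum_pair hne]
  -- identity term
  have t1 : (Equiv.Perm.sign (1 : Perm (Fin (n+1)))) • ∏ i, M ((1 : Perm (Fin (n+1))) i) i
      = ∏ m : Fin (n+1), (X + C ((a : ℂ) * (α m : ℂ))) := by
    simp only [Perm.coe_one, id_eq, map_one, one_smul]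
    exact Finset.prod_congr rfl fun i _ => hdiag i
  -- cycle term
  have t2 : (Equiv.Perm.sign (finRotate (n+1))) • ∏ i, M ((finRotate (n+1)) i) i
      = - C (β : ℂ) := by
    have hprod : ∏ i, M ((finRotate (n+1)) i) i = (-1 : ℂ[X])^n * (- C (β : ℂ)) := by
      have : ∀ i : Fin (n+1), M ((finRotate (n+1)) i) i =
          -C (if ((i+1 : Fin (n+1)) : ℕ) = 0 then (β : ℂ) else 1) := by
        intro i; rw [finRotate_succ_apply]; exact hsub i
      rw [Finset.prod_congr rfl fun i _ => this i]
      rw [← Finset.mul_prod_erase Finset.univ _ (Finset.mem_univ (Fin.last n))]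
      have hlast : ((Fin.last n + 1 : Fin (n+1)) : ℕ) = 0 := by
        rw [Fin.last_add_one]
        rfl
      rw [if_pos hlast]
      have hrest : ∀ i ∈ Finset.univ.erase (Fin.last n),
          -C (if ((i+1 : Fin (n+1)) : ℕ) = 0 then (β : ℂ) else 1) = (-1 : ℂ[X]) := by
        intro i hi
        rw [Finset.mem_erase] at hi
        have : ((i + 1 : Fin (n+1)) : ℕ) ≠ 0 := by
          have hlt : i < Fin.last n := lt_of_le_of_ne (Fin.le_last i) hi.1
          rw [Fin.val_add_one_of_lt hlt]
          omega
        rw [if_neg this]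
        simp
      rw [Finset.prod_congr rfl hrest, Finset.prod_const]
      rw [Finset.card_erase_of_mem (Finset.mem_univ _), Finset.card_univ, Fintype.card_fin]
      have hc : n + 1 - 1 = n := by omega
      rw [hc]
      ring
    rw [hprod, sign_finRotate]
    rcases Nat.even_or_odd n with he | ho
    · simp [he.neg_one_pow]
    · simp [ho.neg_one_pow]
  rw [t1, t2]
  ring



noncomputable def rootf (N : ℕ) (c : ℕ) (k : ℕ) : ℂ :=
  Complex.exp (((Real.pi * (2 * k + c)) / N : ℝ) * Complex.I)

lemma rootf_pow (N : ℕ) (hN : 0 < N) (c : ℕ) (k : ℕ) :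
    rootf N c k ^ N = (-1 : ℂ) ^ c := by
  rw [rootf, ← Complex.exp_nat_mul]
  have hN0 : (N : ℂ) ≠ 0 := Nat.cast_ne_zero.mpr hN.ne'
  have h1 : (N : ℂ) * (((Real.pi * (2 * k + c)) / N : ℝ) * Complex.I)
      = ((2 * k + c : ℕ) : ℂ) * (Real.pi * Complex.I) := by
    push_cast
    field_simp
  rw [h1, Complex.exp_nat_mul, Complex.exp_pi_mul_I]
  rw [pow_add, pow_mul]
  norm_num

lemma rootf_re (N : ℕ) (c : ℕ) (k : ℕ) :
    (rootf N c k).re = Real.cos ((Real.pi * (2 * k + c)) / N) := by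
  rw [rootf, Complex.exp_ofReal_mul_I_re]

lemma rootf_inj (N : ℕ) (hN : 0 < N) (c : ℕ) {k l : ℕ} (hk : k < N) (hl : l < N)
    (h : rootf N c k = rootf N c l) : k = l := by
  rw [rootf, rootf, Complex.exp_eq_exp_iff_exists_int] at h
  obtain ⟨m, hm⟩ := h
  have hre := congrArg Complex.im hm
  simp only [Complex.add_im, Complex.mul_im, Complex.ofReal_im, Complex.ofReal_re,
    Complex.I_im, Complex.I_re, Complex.intCast_im, Complex.intCast_re,
    Complex.mul_re, mul_zero, mul_one, zero_mul, add_zero, zero_add, sub_zero,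
    Complex.re_ofNat, Complex.im_ofNat] at hre
  have hNr : (0 : ℝ) < N := by exact_mod_cast hN
  have hN' : (N : ℝ) ≠ 0 := hNr.ne'
  have hre' : (Real.pi * (2 * k + c)) / N = (Real.pi * (2 * l + c)) / N + m * (2 * Real.pi) := by
    have h2 := hre
    push_cast at h2
    linarith [h2]
  have h2 : Real.pi * (2 * (k : ℝ) + c) = Real.pi * (2 * l + c) + m * (2 * Real.pi) * N := by
    have h3 := congrArg (fun x : ℝ => x * N) hre'
    field_simp at h3
    linear_combination Real.pi * h3
  have h3 : (2 * (k : ℝ) - 2 * l - 2 * m * N) * Real.pi = 0 := by linear_combination h2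
  have hpi : Real.pi ≠ 0 := Real.pi_ne_zero
  have h4 : 2 * (k : ℝ) - 2 * l - 2 * m * N = 0 := by
    rcases mul_eq_zero.mp h3 with h | h
    · exact h
    · exact absurd h hpi
  have h5 : (k : ℤ) = l + m * N := by
    have h6 : ((2 * (k : ℤ) : ℤ) : ℝ) = ((2 * l + 2 * (m * N) : ℤ) : ℝ) := by push_cast; linarith
    have h7 : (2 * (k : ℤ) : ℤ) = 2 * l + 2 * (m * N) := Int.cast_injective h6
    linarith
  have hkz : ((k : ℤ) : ℤ) < N := by exact_mod_cast hk
  have hlz : ((l : ℤ) : ℤ) < N := by exact_mod_cast hl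
  have hk0 : (0 : ℤ) ≤ (k : ℤ) := Int.natCast_nonneg k
  have hl0 : (0 : ℤ) ≤ (l : ℤ) := Int.natCast_nonneg l
  have hNz : (3 : ℤ) ≤ 3 ∨ True := Or.inr trivial
  have hNpos : (0 : ℤ) < N := by exact_mod_cast hN
  have hm0 : m = 0 := by
    rcases lt_trichotomy m 0 with h | h | h
    · have h8 : m * N ≤ -N := by nlinarith
      linarith
    · exact h
    · have h8 : (N : ℤ) ≤ m * N := by nlinarith
      linarith
  rw [hm0] at h5
  simp at h5
  exact_mod_cast h5

lemma roots_Xpow_sub (N : ℕ) (hN : 3 ≤ N) (b : ℤ) (hb : b = 1 ∨ b = -1) :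
    (X ^ N - C ((b : ℝ) : ℂ)).roots =
      (Multiset.range N).map (rootf N (if b = 1 then 0 else 1)) := by
  set c : ℕ := if b = 1 then 0 else 1 with hc
  have hN0 : 0 < N := by omega
  have hbc : ((b : ℝ) : ℂ) = (-1 : ℂ) ^ c := by
    rcases hb with rfl | rfl <;> simp [hc]
  have hqne : (X ^ N - C ((b : ℝ) : ℂ)) ≠ 0 := X_pow_sub_C_ne_zero hN0 _
  have hnodup : ((Multiset.range N).map (rootf N c)).Nodup := by
    refine Multiset.Nodup.map_on ?_ (Multiset.nodup_range N)
    intro k hk l hl h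
    exact rootf_inj N hN0 c (Multiset.mem_range.mp hk) (Multiset.mem_range.mp hl) h
  have hle : (Multiset.range N).map (rootf N c) ≤ (X ^ N - C ((b : ℝ) : ℂ)).roots := by
    rw [Multiset.le_iff_subset hnodup]
    intro z hz
    obtain ⟨k, hk, rfl⟩ := Multiset.mem_map.mp hz
    rw [mem_roots hqne]
    rw [Polynomial.IsRoot.def, eval_sub, eval_pow, eval_X, eval_C, rootf_pow N hN0 c k, hbc,
      sub_self]
  have hcard : Multiset.card ((X ^ N - C ((b : ℝ) : ℂ)).roots) = N := by
    have hsplits : (X ^ N - C ((b : ℝ) : ℂ)).Splits :=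
      IsAlgClosed.splits _
    rw [splits_iff_card_roots.mp hsplits, natDegree_X_pow_sub_C]
  symm
  refine Multiset.eq_of_le_of_card_le hle ?_
  rw [hcard, Multiset.card_map, Multiset.card_range]

lemma rootf_re_sign (N : ℕ) (hN : 3 ≤ N) (c : ℕ) (hc : c ≤ 1)
    (hmod : ¬ (N % 4 = (2 * c) % 4)) (k : ℕ) (hk : k < N) :
    ((rootf N c k).re ≠ 0) ∧
    (0 < (rootf N c k).re ↔ (4 * k + 2 * c < N ∨ 3 * N < 4 * k + 2 * c)) := by
  rw [rootf_re]
  set θ : ℝ := (Real.pi * (2 * k + c)) / N with hθ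
  have hNr : (0 : ℝ) < N := by exact_mod_cast (by omega : 0 < N)
  have hπ : (0 : ℝ) < Real.pi := Real.pi_pos
  have hθN : θ * N = Real.pi * (2 * k + c) := by
    rw [hθ]; field_simp
  have hθ0 : 0 ≤ θ := by
    apply div_nonneg _ hNr.le
    positivity
  have hcast : (4 * k + 2 * c : ℝ) = 2 * (2 * (k:ℝ) + c) := by push_cast; ring
  -- case analysis
  rcases (by omega : 4 * k + 2 * c < N ∨ 4 * k + 2 * c = N ∨
      (N < 4 * k + 2 * c ∧ 4 * k + 2 * c < 3 * N) ∨ 4 * k + 2 * c = 3 * N ∨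
      3 * N < 4 * k + 2 * c) with h | h | h | h | h
  · have hr : (4 * (k:ℝ) + 2 * c) < N := by exact_mod_cast h
    have hlt : θ < Real.pi / 2 := by nlinarith
    have hpos : 0 < Real.cos θ := Real.cos_pos_of_mem_Ioo ⟨by linarith, hlt⟩
    exact ⟨ne_of_gt hpos, by constructor <;> intro _ <;> [exact Or.inl h; exact hpos]⟩
  · exact absurd (by omega : N % 4 = (2 * c) % 4) hmod
  · have hr1 : (N : ℝ) < 4 * (k:ℝ) + 2 * c := by exact_mod_cast h.1
    have hr2 : (4 * (k:ℝ) + 2 * c) < 3 * N := by exact_mod_cast h.2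
    have hgt : Real.pi / 2 < θ := by nlinarith
    have hlt : θ < Real.pi + Real.pi / 2 := by nlinarith
    have hneg : Real.cos θ < 0 := Real.cos_neg_of_pi_div_two_lt_of_lt hgt hlt
    refine ⟨ne_of_lt hneg, ?_⟩
    constructor
    · intro hp; exact absurd hp (not_lt.mpr hneg.le)
    · intro hp; omega
  · exact absurd (by omega : N % 4 = (2 * c) % 4) hmod
  · have hr : (3 * (N:ℝ)) < 4 * (k:ℝ) + 2 * c := by exact_mod_cast h
    have hkr : (2 * (k:ℝ) + c) < 2 * N := by
      have : 2 * k + c < 2 * N := by omega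
      exact_mod_cast this
    have hgt : Real.pi + Real.pi / 2 < θ := by nlinarith
    have hlt : θ < 2 * Real.pi := by nlinarith
    have hpos : 0 < Real.cos θ := by
      rw [← Real.cos_sub_two_pi]
      exact Real.cos_pos_of_mem_Ioo ⟨by linarith, by linarith⟩
    exact ⟨ne_of_gt hpos, by constructor <;> intro _ <;> [exact Or.inr h; exact hpos]⟩

lemma count_pos_roots (N : ℕ) (hN : 3 ≤ N) (c : ℕ) (hc : c ≤ 1)
    (hmod : ¬ (N % 4 = (2 * c) % 4)) :
    Multiset.card ((((Multiset.range N).map (rootf N c)).filter fun z => 0 < z.re))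
      = (N + 3 - 2 * c) / 4 + (N - ((3 * N - 2 * c) / 4 + 1)) := by
  rw [Multiset.filter_map, Multiset.card_map]
  have hcongr : (Multiset.range N).filter ((fun z : ℂ => 0 < z.re) ∘ rootf N c)
      = (Multiset.range N).filter (fun k => 4 * k + 2 * c < N ∨ 3 * N < 4 * k + 2 * c) := by
    apply Multiset.filter_congr
    intro k hk
    exact (rootf_re_sign N hN c hc hmod k (Multiset.mem_range.mp hk)).2
  rw [hcongr]
  have h1 : (Multiset.range N).filter (fun k => 4 * k + 2 * c < N ∨ 3 * N < 4 * k + 2 * c)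
      = ((Finset.range N).filter (fun k => 4 * k + 2 * c < N ∨ 3 * N < 4 * k + 2 * c)).val := by
    rw [Finset.filter_val, Finset.range_val]
  rw [h1, ← Finset.card_def]
  have h2 : (Finset.range N).filter (fun k => 4 * k + 2 * c < N ∨ 3 * N < 4 * k + 2 * c)
      = (Finset.range ((N + 3 - 2 * c) / 4)) ∪ (Finset.Ico ((3 * N - 2 * c) / 4 + 1) N) := by
    ext k
    simp only [Finset.mem_filter, Finset.mem_range, Finset.mem_union, Finset.mem_Ico]
    omega
  rw [h2, Finset.card_union_of_disjoint]
  · rw [Finset.card_range, Nat.card_Ico]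
  · rw [Finset.disjoint_left]
    intro k hk1 hk2
    rw [Finset.mem_range] at hk1
    rw [Finset.mem_Ico] at hk2
    omega


lemma charpoly_acyc' (N : ℕ) (hN : 3 ≤ N) (α : Fin N → ℝ) (β a : ℝ) :
    Matrix.charpoly ((Acyc N α β a).map (algebraMap ℝ ℂ)) =
      (∏ m : Fin N, (X + C ((a : ℂ) * (α m : ℂ)))) - C (β : ℂ) := by
  obtain ⟨n, rfl⟩ : ∃ n, N = n + 1 := ⟨N - 1, by omega⟩
  exact charpoly_acyc n (by omega) α β a

section Main

variable (N : ℕ) (α : Fin N → ℝ) (b : ℤ)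

/-- The characteristic polynomial family. -/
noncomputable def Pfam (a : ℝ) : ℂ[X] :=
  (∏ m : Fin N, (X + C ((a : ℂ) * (α m : ℂ)))) - C ((b : ℝ) : ℂ)

lemma prodXaddC_natDegree (a : ℝ) : (∏ m : Fin N, (X + C ((a : ℂ) * (α m : ℂ)))).natDegree = N := by
  rw [natDegree_prod_of_monic _ _ fun i _ => monic_X_add_C _]
  simp only [natDegree_X_add_C, Finset.sum_const, Finset.card_univ, Fintype.card_fin,
    smul_eq_mul, mul_one]

lemma Pfam_monic (hN : 3 ≤ N) (a : ℝ) : (Pfam N α b a).Monic := by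
  have hp : (∏ m : Fin N, (X + C ((a : ℂ) * (α m : ℂ)))).Monic :=
    monic_prod_of_monic _ _ fun i _ => monic_X_add_C _
  have hdeg := prodXaddC_natDegree N α a
  rw [Pfam, sub_eq_add_neg]
  refine hp.add_of_left ?_
  refine lt_of_le_of_lt ((degree_neg _).le.trans degree_C_le) ?_
  rw [degree_eq_natDegree hp.ne_zero, hdeg]
  exact_mod_cast (by omega : 0 < N)

lemma Pfam_natDegree (hN : 3 ≤ N) (a : ℝ) : (Pfam N α b a).natDegree = N := by
  rw [Pfam, natDegree_sub_C, prodXaddC_natDegree]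

lemma Pfam_card_roots (hN : 3 ≤ N) (a : ℝ) :
    Multiset.card (Pfam N α b a).roots = N := by
  rw [splits_iff_card_roots.mp (IsAlgClosed.splits _), Pfam_natDegree N α b hN a]

lemma Pfam_zero : Pfam N α b 0 = X ^ N - C ((b : ℝ) : ℂ) := by
  rw [Pfam]
  congr 1
  simp

lemma Pfam_eval (a : ℝ) (z : ℂ) :
    eval z (Pfam N α b a) = (∏ m : Fin N, (z + (a : ℂ) * (α m : ℂ))) - ((b : ℝ) : ℂ) := by
  rw [Pfam]
  simp [eval_prod]

lemma Pfam_root_bound (hN : 3 ≤ N) (hb : b = 1 ∨ b = -1) (a : ℝ) (ha : |a| ≤ 1)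
    (z : ℂ) (hz : z ∈ (Pfam N α b a).roots) :
    ‖z‖ ≤ 2 + ∑ m : Fin N, |α m| := by
  set M : ℝ := 2 + ∑ m : Fin N, |α m| with hM
  by_contra hcon
  push_neg at hcon
  have hroot : (∏ m : Fin N, (z + (a : ℂ) * (α m : ℂ))) = ((b : ℝ) : ℂ) := by
    have := (mem_roots (Pfam_monic N α b hN a).ne_zero).mp hz
    rw [IsRoot.def, Pfam_eval] at this
    linear_combination this
  have habs : ∏ m : Fin N, ‖z + (a : ℂ) * (α m : ℂ)‖ = 1 := by
    rw [← norm_prod, hroot]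
    rcases hb with rfl | rfl <;> norm_num
  have hfac : ∀ m : Fin N, (2 : ℝ) ≤ ‖z + (a : ℂ) * (α m : ℂ)‖ := by
    intro m
    have h1 : ‖z‖ - ‖(a : ℂ) * (α m : ℂ)‖ ≤
        ‖z + (a : ℂ) * (α m : ℂ)‖ := by
      have h := norm_add_le (z + (a : ℂ) * (α m : ℂ)) (-((a : ℂ) * (α m : ℂ)))
      rw [add_neg_cancel_right, norm_neg] at h
      linarith
    have h2 : ‖(a : ℂ) * (α m : ℂ)‖ ≤ |α m| := by
      rw [norm_mul, Complex.norm_real, Complex.norm_real, Real.norm_eq_abs, Real.norm_eq_abs]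
      calc |a| * |α m| ≤ 1 * |α m| := by
            apply mul_le_mul_of_nonneg_right ha (abs_nonneg _)
        _ = |α m| := one_mul _
    have h3 : |α m| ≤ ∑ m' : Fin N, |α m'| :=
      Finset.single_le_sum (fun i _ => abs_nonneg (α i)) (Finset.mem_univ m)
    linarith
  have hgr : (2 : ℝ) ^ N ≤ ∏ m : Fin N, ‖z + (a : ℂ) * (α m : ℂ)‖ := by
    calc (2:ℝ)^N = ∏ _m : Fin N, (2:ℝ) := by rw [Finset.prod_const, Finset.card_univ,
          Fintype.card_fin]
      _ ≤ _ := Finset.prod_le_prod (fun i _ => by norm_num) (fun i _ => hfac i)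
  rw [habs] at hgr
  have h2N : (2:ℝ) ≤ 2 ^ N := by
    calc (2:ℝ) = 2 ^ 1 := (pow_one 2).symm
    _ ≤ 2 ^ N := pow_le_pow_right₀ (by norm_num) (by omega)
  linarith

end Main

open Filter Topology


/-- **Unstable dimension for small parameter `a`, nonresonant case (Proposition
3.3, equation (3.21)).** If `N ≢ 1 − β (mod 4)` then for all small `a > 0`, no
eigenvalue of `A(a)` has zero real part and
`μ(A(a)) = 2⌊(N−1+β)/4⌋ + 1 + (1−β)/2`. -/
theorem unstable_dimension_at_zero_nonresonant (N : ℕ) (hN : 3 ≤ N)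
    (α : Fin N → ℝ) (hα : ∀ m, α m ≠ 0) (hprod : ∏ m : Fin N, |α m| = 1)
    (b : ℤ) (hb : b = 1 ∨ b = -1)
    (hmod : ¬ ((N : ℤ) % 4 = (1 - b) % 4)) :
    ∃ δ : ℝ, 0 < δ ∧ ∀ a ∈ Set.Ioo (0 : ℝ) δ,
      (∀ z ∈ specC (Acyc N α (b : ℝ) a), z.re ≠ 0) ∧
      (muM (Acyc N α (b : ℝ) a) : ℤ) =
        2 * (((N : ℤ) - 1 + b) / 4) + 1 + (1 - b) / 2 := by
  classical
  set c : ℕ := if b = 1 then 0 else 1 with hc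
  have hbc : (b = 1 ∧ c = 0) ∨ (b = -1 ∧ c = 1) := by
    rcases hb with rfl | rfl
    · exact Or.inl ⟨rfl, by simp [hc]⟩
    · exact Or.inr ⟨rfl, by norm_num [hc]⟩
  have hc1 : c ≤ 1 := by rcases hbc with ⟨_, hc0⟩ | ⟨_, hc0⟩ <;> omega
  have hmodc : ¬ (N % 4 = (2 * c) % 4) := by
    rcases hbc with ⟨hb1, hc0⟩ | ⟨hb1, hc0⟩ <;> rw [hc0] <;> rw [hb1] at hmod <;>
      norm_num at hmod ⊢ <;> omega
  have hspec : ∀ a : ℝ, specC (Acyc N α (b : ℝ) a) = (Pfam N α b a).roots := by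
    intro a
    rw [specC, charpoly_acyc' N hN, Pfam]
  have hqroots : ((X : ℂ[X]) ^ N - C ((b : ℝ) : ℂ)).roots
      = (Multiset.range N).map (rootf N c) := by
    rw [roots_Xpow_sub N hN b hb]
  -- target count
  set T : ℕ := (N + 3 - 2 * c) / 4 + (N - ((3 * N - 2 * c) / 4 + 1)) with hT
  have hTeq : (T : ℤ) = 2 * (((N : ℤ) - 1 + b) / 4) + 1 + (1 - b) / 2 := by
    have hm' := hmodc
    rcases hbc with ⟨hb1, hc0⟩ | ⟨hb1, hc0⟩ <;> rw [hT, hb1, hc0] <;> rw [hc0] at hm' <;>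
      norm_num at hm' ⊢ <;> omega
  by_contra hcon
  push_neg at hcon
  -- extract sequence
  have hseq : ∀ j : ℕ, ∃ a, a ∈ Set.Ioo (0:ℝ) (1/((j:ℝ)+1)) ∧
      ((∀ z ∈ specC (Acyc N α (b : ℝ) a), z.re ≠ 0) →
        (muM (Acyc N α (b : ℝ) a) : ℤ) ≠ 2 * (((N : ℤ) - 1 + b) / 4) + 1 + (1 - b) / 2) := by
    intro j
    obtain ⟨a, ha, hbad⟩ := hcon (1/((j:ℝ)+1)) (by positivity)
    exact ⟨a, ha, hbad⟩
  choose aa haa hbad using hseq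
  have haa0 : ∀ j, 0 < aa j := fun j => (haa j).1
  have haa1 : ∀ j, aa j ≤ 1 := by
    intro j
    have h2 := (haa j).2
    have : (1:ℝ)/((j:ℝ)+1) ≤ 1 := by
      rw [div_le_one (by positivity)]
      simp
    linarith
  have haalim : Tendsto aa atTop (𝓝 0) :=
    squeeze_zero (fun j => (haa0 j).le) (fun j => (haa j).2.le)
      tendsto_one_div_add_atTop_nhds_zero_nat
  -- root vectors
  have hlen : ∀ j, ((Pfam N α b (aa j)).roots).toList.length = N := by
    intro j
    rw [Multiset.length_toList, Pfam_card_roots N α b hN]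
  set v : ℕ → Fin N → ℂ :=
    fun j i => ((Pfam N α b (aa j)).roots).toList.get ⟨i.val, by rw [hlen j]; exact i.isLt⟩
    with hv
  have hofFn : ∀ j, List.ofFn (v j) = ((Pfam N α b (aa j)).roots).toList := by
    intro j
    apply List.ext_get
    · rw [List.length_ofFn, hlen]
    · intro k h1 h2
      rw [List.get_ofFn]
      rfl
  have hroots_eq : ∀ j, (Pfam N α b (aa j)).roots = ↑(List.ofFn (v j)) := by
    intro j
    rw [hofFn, Multiset.coe_toList]
  have hPfact : ∀ j, Pfam N α b (aa j) = ∏ i : Fin N, (X - C (v j i)) := by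
    intro j
    have hm := Pfam_monic N α b hN (aa j)
    have heq := (IsAlgClosed.splits _).eq_prod_roots_of_monic hm
    rw [hroots_eq j] at heq
    rw [heq, Multiset.map_coe, Multiset.prod_coe, List.map_ofFn, List.prod_ofFn]
    rfl
  -- boundedness and convergent subsequence
  set M : ℝ := 2 + ∑ m : Fin N, |α m| with hMdef
  have hM0 : 0 ≤ M := by positivity
  have hvb : ∀ j, v j ∈ Metric.closedBall (0 : Fin N → ℂ) M := by
    intro j
    rw [Metric.mem_closedBall, dist_zero_right, pi_norm_le_iff_of_nonneg hM0]
    intro i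
    have hmem : v j i ∈ (Pfam N α b (aa j)).roots := by
      rw [hroots_eq j]
      exact Multiset.mem_coe.mpr (List.mem_ofFn.mpr ⟨i, rfl⟩)
    have := Pfam_root_bound N α b hN hb (aa j)
      (by rw [abs_of_pos (haa0 j)]; exact haa1 j) _ hmem
    exact this
  obtain ⟨x, hxmem, φ, hφ, hconv⟩ :=
    tendsto_subseq_of_bounded Metric.isBounded_closedBall hvb
  have hconv_i : ∀ i, Tendsto (fun j => v (φ j) i) atTop (𝓝 (x i)) := by
    rw [tendsto_pi_nhds] at hconv
    exact fun i => hconv i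
  -- identify the limit polynomial
  have hxpoly : (X : ℂ[X]) ^ N - C ((b : ℝ) : ℂ) = ∏ i : Fin N, (X - C (x i)) := by
    apply Polynomial.funext
    intro z
    have hcont : Continuous fun t : ℝ =>
        (∏ m : Fin N, (z + (t : ℂ) * (α m : ℂ))) - ((b : ℝ) : ℂ) := by
      apply Continuous.sub _ continuous_const
      apply continuous_finset_prod
      intro m _
      exact continuous_const.add (Complex.continuous_ofReal.mul continuous_const)
    have hlim : Tendsto (fun j => aa (φ j)) atTop (𝓝 0) := haalim.comp hφ.tendsto_atTop
    have h1 : Tendsto (fun j => eval z (Pfam N α b (aa (φ j)))) atTop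
        (𝓝 (eval z ((X : ℂ[X]) ^ N - C ((b : ℝ) : ℂ)))) := by
      have h1a := (hcont.tendsto 0).comp hlim
      have hval : (∏ m : Fin N, (z + ((0:ℝ) : ℂ) * (α m : ℂ))) - ((b : ℝ) : ℂ)
          = eval z ((X : ℂ[X]) ^ N - C ((b : ℝ) : ℂ)) := by
        simp
      rw [Function.comp_def] at h1a
      rw [← hval]
      refine h1a.congr ?_
      intro j
      rw [Pfam_eval]
    have h2 : Tendsto (fun j => eval z (Pfam N α b (aa (φ j)))) atTop
        (𝓝 (∏ i : Fin N, (z - x i))) := by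
      have h2a : Tendsto (fun j => ∏ i : Fin N, (z - v (φ j) i)) atTop
          (𝓝 (∏ i : Fin N, (z - x i))) := by
        apply tendsto_finset_prod
        intro i _
        exact tendsto_const_nhds.sub (hconv_i i)
      refine h2a.congr ?_
      intro j
      rw [hPfact (φ j)]
      simp [eval_prod]
    have huniq := tendsto_nhds_unique h1 h2
    rw [huniq, eval_prod]
    simp
  -- roots of the limit polynomial
  have hxroots : Multiset.map x Finset.univ.val = (Multiset.range N).map (rootf N c) := by
    have h1 : ((X : ℂ[X]) ^ N - C ((b : ℝ) : ℂ)).roots = Multiset.map x Finset.univ.val := by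
      rw [hxpoly]
      have h2 : ∏ i : Fin N, (X - C (x i))
          = ((Multiset.map x Finset.univ.val).map fun r => X - C r).prod := by
        rw [Multiset.map_map]
        rfl
      rw [h2, roots_multiset_prod_X_sub_C]
    rw [← h1, hqroots]
  have hxmemroot : ∀ i : Fin N, ∃ k, k < N ∧ x i = rootf N c k := by
    intro i
    have hmm : x i ∈ Multiset.map x Finset.univ.val :=
      Multiset.mem_map.mpr ⟨i, Finset.mem_univ_val i, rfl⟩
    rw [hxroots] at hmm
    obtain ⟨k, hk, he⟩ := Multiset.mem_map.mp hmm
    exact ⟨k, Multiset.mem_range.mp hk, he.symm⟩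
  have hxre : ∀ i, (x i).re ≠ 0 := by
    intro i
    obtain ⟨k, hk, he⟩ := hxmemroot i
    rw [he]
    exact (rootf_re_sign N hN c hc1 hmodc k hk).1
  have hxcount : (Finset.univ.filter fun i : Fin N => 0 < (x i).re).card = T := by
    have h1 : Multiset.card ((Multiset.map x Finset.univ.val).filter fun z => 0 < z.re)
        = (Finset.univ.filter fun i : Fin N => 0 < (x i).re).card := by
      rw [Multiset.filter_map, Multiset.card_map]
      rfl
    rw [← h1, hxroots, count_pos_roots N hN c hc1 hmodc, hT]
  -- choose a close subsequence element
  have hNe : (Finset.univ : Finset (Fin N)).Nonempty := ⟨⟨0, by omega⟩, Finset.mem_univ _⟩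
  set ε : ℝ := Finset.univ.inf' hNe fun i => |(x i).re| with hε
  have hε0 : 0 < ε := by
    rw [hε, Finset.lt_inf'_iff]
    intro i _
    exact abs_pos.mpr (hxre i)
  obtain ⟨J, hJ⟩ := (Metric.tendsto_atTop.mp hconv) ε hε0
  have hj := hJ J le_rfl
  have hji : ∀ i, dist (v (φ J) i) (x i) < ε := by
    rw [Function.comp_apply, dist_pi_lt_iff hε0] at hj
    exact hj
  have hsign : ∀ i, ((0 < (v (φ J) i).re ↔ 0 < (x i).re) ∧ (v (φ J) i).re ≠ 0) := by
    intro i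
    have hd : |(v (φ J) i).re - (x i).re| < ε := by
      have h1 : |(v (φ J) i - x i).re| ≤ ‖v (φ J) i - x i‖ :=
        Complex.abs_re_le_norm _
      rw [Complex.sub_re] at h1
      have h2 : ‖v (φ J) i - x i‖ = dist (v (φ J) i) (x i) :=
        (Complex.dist_eq _ _).symm
      linarith [hji i]
    have hεle : ε ≤ |(x i).re| := by
      rw [hε]
      exact Finset.inf'_le _ (Finset.mem_univ i)
    rw [abs_lt] at hd
    constructor
    · constructor
      · intro hp
        by_contra hneg
        push_neg at hneg
        have hlt : (x i).re < 0 := lt_of_le_of_ne hneg (hxre i)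
        rw [abs_of_neg hlt] at hεle
        linarith
      · intro hp
        rw [abs_of_pos hp] at hεle
        linarith
    · intro h0
      rcases lt_or_gt_of_ne (hxre i) with hx | hx
      · rw [abs_of_neg hx] at hεle
        linarith
      · rw [abs_of_pos hx] at hεle
        linarith
  -- contradiction with hbad
  have hA : ∀ z ∈ specC (Acyc N α (b : ℝ) (aa (φ J))), z.re ≠ 0 := by
    intro z hz
    rw [hspec, hroots_eq (φ J)] at hz
    obtain ⟨i, hi⟩ := List.mem_ofFn.mp (Multiset.mem_coe.mp hz)
    rw [← hi]
    exact (hsign i).2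
  have hB : (muM (Acyc N α (b : ℝ) (aa (φ J))) : ℤ)
      = 2 * (((N : ℤ) - 1 + b) / 4) + 1 + (1 - b) / 2 := by
    have hmu : muM (Acyc N α (b : ℝ) (aa (φ J))) = T := by
      rw [muM, hspec, hroots_eq (φ J), ← Fin.univ_val_map, Multiset.filter_map,
        Multiset.card_map]
      have hfc : Finset.univ.val.filter ((fun z : ℂ => 0 < z.re) ∘ (v (φ J)))
          = (Finset.univ.filter fun i : Fin N => 0 < (v (φ J) i).re).val := by
        rw [Finset.filter_val]
        rfl
      rw [hfc, ← Finset.card_def]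
      rw [Finset.filter_congr fun i _ => (hsign i).1]
      exact hxcount
    rw [hmu, hTeq]
  exact hbad (φ J) hA hB
end
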